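/- arXiv:1503.06954 — 7 statements merged into one kernel-verified Lean document; each statement's English description precedes it below -/
import Mathlib

section
/- For every complex s that is not a nonpositive real integer ≤ -1, the logarithmic derivative of Π(s) := Γ(s+1) is given by the absolutely convergent series Π′(s)/Π(s) = Σ_{n=1}^{∞} [ -1/(s+n) + log(n+1) - log n ]. -/
open Complex Set Filter Topology

noncomputable section DigammaSeriesAux

/-- The term of the digamma series. -/
def dgF (n : ℕ) (z : ℂ) : ℂ :=
  -1 / (z + ((n : ℂ) + 1)) + (Real.log ((n : ℝ) + 2) : ℂ) - (Real.log ((n : ℝ) + 1) : ℂ)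

/-- The domain: complement of the negative integers. -/
def dgU : Set ℂ := (Set.range ((↑) : ℤ → ℂ) ∩ {z : ℂ | z.re ≤ -1})ᶜ

lemma mem_dgU {z : ℂ} : z ∈ dgU ↔ ∀ n : ℕ, 1 ≤ n → z ≠ -(n : ℂ) := by
  constructor
  · rintro h n hn rfl
    refine h ⟨⟨-(n : ℤ), by push_cast; ring⟩, ?_⟩
    simp only [mem_setOf_eq]
    rw [show -(n:ℂ) = ((-(n:ℝ) : ℝ) : ℂ) by push_cast; ring, Complex.ofReal_re]
    have : (1:ℝ) ≤ n := by exact_mod_cast hn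
    linarith
  · rintro h ⟨⟨m, rfl⟩, hm⟩
    have hm' : (m : ℝ) ≤ -1 := by
      simpa using hm
    have hm2 : m ≤ -1 := by exact_mod_cast hm'
    refine h (-m).toNat ?_ ?_
    · omega
    · rw [show ((-m).toNat : ℂ) = ((((-m).toNat : ℤ)) : ℂ) by push_cast; ring,
        Int.toNat_of_nonneg (by omega : (0:ℤ) ≤ -m)]
      push_cast
      ring

lemma isOpen_dgU : IsOpen dgU :=
  (Complex.isClosed_range_intCast.inter (isClosed_le Complex.continuous_re continuous_const)).isOpen_compl

lemma preconnected_dgU : IsPreconnected dgU := by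
  have hc : (Set.range ((↑) : ℤ → ℂ) ∩ {z : ℂ | z.re ≤ -1}).Countable :=
    (Set.countable_range _).mono Set.inter_subset_left
  exact (hc.isConnected_compl_of_one_lt_rank
    (by rw [Complex.rank_real_complex]; norm_num)).isPreconnected

lemma dgU_add_ne {z : ℂ} (hz : z ∈ dgU) (n : ℕ) : z + ((n : ℂ) + 1) ≠ 0 := by
  intro h
  exact mem_dgU.mp hz (n + 1) (by omega) (by push_cast; linear_combination h)

lemma dg_est {R : ℝ} (hR : 0 ≤ R) {z : ℂ} (hz : ‖z‖ ≤ R) {n : ℕ} (hn : 2 * R ≤ n) :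
    ‖dgF n z‖ ≤ (2 * R + 1) / ((n : ℝ) + 1) ^ 2 := by
  unfold dgF
  have hn1 : (0:ℝ) < (n:ℝ) + 1 := by positivity
  have hlow : ((n:ℝ) + 1) / 2 ≤ ‖z + ((n : ℂ) + 1)‖ := by
    have h1 : ‖((n : ℂ) + 1)‖ - ‖z‖ ≤ ‖z + ((n : ℂ) + 1)‖ := by
      calc ‖((n : ℂ) + 1)‖ - ‖z‖ ≤ ‖z + ((n : ℂ) + 1) - z‖ - ‖z‖ + 0 := by
            simp
        _ ≤ ‖z + ((n : ℂ) + 1)‖ := by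
            have := norm_sub_norm_le (z + ((n : ℂ) + 1)) z
            have := norm_sub_le (z + ((n : ℂ) + 1)) z
            linarith [norm_sub_norm_le (z + ((n : ℂ) + 1)) z]
    have h2 : ‖((n : ℂ) + 1)‖ = (n:ℝ) + 1 := by
      rw [show ((n : ℂ) + 1) = (((n:ℝ) + 1 : ℝ) : ℂ) by push_cast; ring, Complex.norm_real,
        Real.norm_of_nonneg (by positivity)]
    nlinarith [hz]
  have hznz : z + ((n : ℂ) + 1) ≠ 0 := by
    intro h
    rw [h, norm_zero] at hlow
    linarith
  set L : ℝ := Real.log ((n:ℝ) + 2) - Real.log ((n:ℝ) + 1) - 1 / ((n:ℝ) + 1) with hL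
  have key : -1 / (z + ((n : ℂ) + 1)) + (Real.log ((n : ℝ) + 2) : ℂ) - (Real.log ((n : ℝ) + 1) : ℂ)
      = z / (((n : ℂ) + 1) * (z + ((n : ℂ) + 1))) + (L : ℂ) := by
    have hn0 : ((n : ℂ) + 1) ≠ 0 := by
      intro h
      have := congrArg Complex.re h
      simp at this
      nlinarith [this]
    push_cast [hL]
    field_simp
    ring
  rw [key]
  have hb1 : ‖z / (((n : ℂ) + 1) * (z + ((n : ℂ) + 1)))‖ ≤ 2 * R / ((n:ℝ) + 1) ^ 2 := by
    rw [norm_div, norm_mul]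
    have h2 : ‖((n : ℂ) + 1)‖ = (n:ℝ) + 1 := by
      rw [show ((n : ℂ) + 1) = (((n:ℝ) + 1 : ℝ) : ℂ) by push_cast; ring, Complex.norm_real,
        Real.norm_of_nonneg (by positivity)]
    rw [h2]
    have hwpos : (0:ℝ) < ((n:ℝ) + 1) * ‖z + ((n : ℂ) + 1)‖ :=
      mul_pos hn1 (lt_of_lt_of_le (by positivity) hlow)
    rw [div_le_div_iff₀ hwpos (by positivity)]
    have e1 : ‖z‖ * ((n:ℝ) + 1) ^ 2 ≤ R * ((n:ℝ) + 1) ^ 2 := by nlinarith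
    have e2 : 2 * R * (((n:ℝ) + 1) * (((n:ℝ) + 1) / 2)) ≤ 2 * R * (((n:ℝ) + 1) * ‖z + ((n : ℂ) + 1)‖) := by
      apply mul_le_mul_of_nonneg_left _ (by positivity)
      exact mul_le_mul_of_nonneg_left hlow (by positivity)
    nlinarith [e1, e2]
  have hb2 : ‖(L : ℂ)‖ ≤ 1 / ((n:ℝ) + 1) ^ 2 := by
    rw [Complex.norm_real]
    set x : ℝ := 1 / ((n:ℝ) + 1) with hx
    have hx0 : 0 < x := by positivity
    have hlog : Real.log ((n:ℝ) + 2) - Real.log ((n:ℝ) + 1) = Real.log (1 + x) := by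
      rw [← Real.log_div (by positivity) (by positivity)]
      congr 1
      rw [hx]
      field_simp
      ring
    have hup : Real.log (1 + x) ≤ x := by
      have := Real.log_le_sub_one_of_pos (by positivity : (0:ℝ) < 1 + x)
      linarith
    have hdown : x - x ^ 2 ≤ Real.log (1 + x) := by
      have h1 : Real.log (1 + x)⁻¹ ≤ (1 + x)⁻¹ - 1 :=
        Real.log_le_sub_one_of_pos (by positivity)
      rw [Real.log_inv] at h1
      have h3 : x - x ^ 2 ≤ x / (1 + x) := by
        rw [le_div_iff₀ (by positivity)]
        nlinarith [pow_pos hx0 3]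
      have h2 : x / (1 + x) = 1 - (1 + x)⁻¹ := by field_simp; ring
      linarith [h3, h2 ▸ h3]
    have habs : |L| ≤ x ^ 2 := by
      rw [hL, hlog]
      rw [abs_le]
      constructor <;> linarith
    calc |L| ≤ x ^ 2 := habs
      _ = 1 / ((n:ℝ) + 1) ^ 2 := by rw [hx]; rw [div_pow, one_pow]
  calc ‖z / (((n : ℂ) + 1) * (z + ((n : ℂ) + 1))) + (L : ℂ)‖
      ≤ ‖z / (((n : ℂ) + 1) * (z + ((n : ℂ) + 1)))‖ + ‖(L : ℂ)‖ := norm_add_le _ _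
    _ ≤ 2 * R / ((n:ℝ) + 1) ^ 2 + 1 / ((n:ℝ) + 1) ^ 2 := add_le_add hb1 hb2
    _ = (2 * R + 1) / ((n:ℝ) + 1) ^ 2 := by ring

lemma dg_bound_summable (c : ℝ) : Summable (fun n : ℕ => c / ((n:ℝ) + 1) ^ 2) := by
  have h0 : Summable (fun n : ℕ => 1 / (n:ℝ) ^ 2) :=
    Real.summable_one_div_nat_pow.mpr one_lt_two
  have h : Summable (fun n : ℕ => 1 / ((n:ℝ) + 1) ^ 2) := by
    have := (summable_nat_add_iff (f := fun n : ℕ => 1 / (n:ℝ) ^ 2) 1).mpr h0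
    refine this.congr fun n => ?_
    push_cast
    ring_nf
  simpa [div_eq_mul_inv, mul_comm, mul_assoc] using h.mul_left c

lemma dg_summable_norm (z : ℂ) : Summable fun n : ℕ => ‖dgF n z‖ := by
  refine Summable.of_norm_bounded_eventually_nat (g := fun n => (2 * ‖z‖ + 1) / ((n:ℝ) + 1) ^ 2)
    (dg_bound_summable _) ?_
  filter_upwards [eventually_ge_atTop ⌈2 * ‖z‖⌉₊] with n hn
  rw [Real.norm_of_nonneg (norm_nonneg _)]
  exact dg_est (norm_nonneg z) le_rfl (le_trans (Nat.le_ceil _) (by exact_mod_cast hn))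

noncomputable def dgD (z : ℂ) : ℂ := ∑' n, dgF n z

lemma dgF_differentiableAt {n : ℕ} {z : ℂ} (hz : z + ((n:ℂ)+1) ≠ 0) :
    DifferentiableAt ℂ (dgF n) z := by
  unfold dgF
  apply DifferentiableAt.sub_const
  apply DifferentiableAt.add_const
  exact (differentiableAt_const _).div (differentiableAt_id.add_const _) hz

lemma dgD_differentiableAt {x : ℂ} (hx : x ∈ dgU) : DifferentiableAt ℂ dgD x := by
  obtain ⟨δ, hδ0, hδ⟩ := Metric.isOpen_iff.mp isOpen_dgU x hx
  set R : ℝ := ‖x‖ + δ with hR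
  have hR0 : 0 ≤ R := by positivity
  set N0 : ℕ := ⌈2 * R⌉₊ with hN0
  have hball_norm : ∀ z ∈ Metric.ball x δ, ‖z‖ ≤ R := by
    intro z hz
    have h1 := mem_ball_iff_norm.mp hz
    calc ‖z‖ = ‖x + (z - x)‖ := by ring_nf
      _ ≤ ‖x‖ + ‖z - x‖ := norm_add_le _ _
      _ ≤ R := by rw [hR]; linarith
  have htail : DifferentiableOn ℂ (fun z => ∑' n, dgF (n + N0) z) (Metric.ball x δ) := by
    refine differentiableOn_tsum_of_summable_norm
      (u := fun n : ℕ => (2 * R + 1) / (((n : ℝ) + N0) + 1) ^ 2) ?_ ?_ Metric.isOpen_ball ?_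
    · have := (summable_nat_add_iff (f := fun n : ℕ => (2 * R + 1) / ((n:ℝ) + 1) ^ 2) N0).mpr
        (dg_bound_summable _)
      refine this.congr fun n => ?_
      push_cast
      ring_nf
    · intro n
      intro z hz
      exact (dgF_differentiableAt (dgU_add_ne (hδ hz) _)).differentiableWithinAt
    · intro n w hw
      have h1 : 2 * R ≤ ((n + N0 : ℕ) : ℝ) := by
        push_cast
        have := Nat.le_ceil (2 * R)
        have h2 : (N0 : ℝ) = (⌈2 * R⌉₊ : ℝ) := by rw [hN0]
        linarith [Nat.le_ceil (2 * R), (by positivity : (0:ℝ) ≤ (n:ℝ))]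
      have := dg_est hR0 (hball_norm w hw) h1
      convert this using 3
      push_cast
      ring
  have hD_eq : ∀ z ∈ Metric.ball x δ, dgD z
      = (∑ n ∈ Finset.range N0, dgF n z) + ∑' n, dgF (n + N0) z := by
    intro z _
    exact (Summable.sum_add_tsum_nat_add N0 (dg_summable_norm z).of_norm).symm
  have hfin : DifferentiableAt ℂ (fun z => ∑ n ∈ Finset.range N0, dgF n z) x :=
    DifferentiableAt.fun_sum fun n _ => dgF_differentiableAt (dgU_add_ne hx n)
  have h2 : DifferentiableAt ℂ
      (fun z => (∑ n ∈ Finset.range N0, dgF n z) + ∑' n, dgF (n + N0) z) x :=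
    hfin.add (htail.differentiableAt (Metric.isOpen_ball.mem_nhds (Metric.mem_ball_self hδ0)))
  exact h2.congr_of_eventuallyEq <|
    Filter.eventuallyEq_of_mem (Metric.isOpen_ball.mem_nhds (Metric.mem_ball_self hδ0)) hD_eq

lemma dgD_analytic : AnalyticOnNhd ℂ dgD dgU := by
  have h : DifferentiableOn ℂ dgD dgU :=
    fun x hx => (dgD_differentiableAt hx).differentiableWithinAt
  exact h.analyticOnNhd isOpen_dgU

noncomputable def dgP (z : ℂ) : ℂ := Complex.Gamma (z + 1)
noncomputable def dgG (z : ℂ) : ℂ := deriv dgP z / dgP z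

lemma dgU_shift_ne {z : ℂ} (hz : z ∈ dgU) (m : ℕ) : z + 1 ≠ -(m : ℂ) := by
  intro h
  exact mem_dgU.mp hz (m + 1) (by omega) (by push_cast; linear_combination h)

lemma dgP_ne_zero {z : ℂ} (hz : z ∈ dgU) : dgP z ≠ 0 :=
  Complex.Gamma_ne_zero (dgU_shift_ne hz)

lemma dgP_differentiableAt {z : ℂ} (hz : z ∈ dgU) : DifferentiableAt ℂ dgP z := by
  have h := Complex.differentiableAt_Gamma (z + 1) (dgU_shift_ne hz)
  exact h.comp z (differentiableAt_id.add_const 1)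

lemma dgP_analytic : AnalyticOnNhd ℂ dgP dgU := by
  have h : DifferentiableOn ℂ dgP dgU := fun x hx => (dgP_differentiableAt hx).differentiableWithinAt
  exact h.analyticOnNhd isOpen_dgU

lemma dgG_analytic : AnalyticOnNhd ℂ dgG dgU :=
  (dgP_analytic.deriv_of_isOpen isOpen_dgU).div dgP_analytic (fun z hz => dgP_ne_zero hz)

lemma dgU_add_one {z : ℂ} (hz : z ∈ dgU) : z + 1 ∈ dgU := by
  rw [mem_dgU]
  intro n hn h
  exact mem_dgU.mp hz (n + 1) (by omega) (by push_cast; linear_combination h)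

lemma dgU_add_nat {z : ℂ} (hz : z ∈ dgU) (N : ℕ) : z + N ∈ dgU := by
  induction N with
  | zero => simpa using hz
  | succ k ih =>
      have h := dgU_add_one ih
      rw [show z + ((k+1 : ℕ) : ℂ) = z + (k:ℂ) + 1 by push_cast; ring]
      exact h

lemma dgG_rec {z : ℂ} (hz : z ∈ dgU) : dgG z = dgG (z + 1) - 1 / (z + 1) := by
  have hz1 : z + 1 ≠ 0 := by
    have := dgU_shift_ne hz 0
    simpa using this
  have hz1U : z + 1 ∈ dgU := dgU_add_one hz
  have hPz := (dgP_differentiableAt hz).hasDerivAt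
  have hQ : HasDerivAt (fun w => dgP (w + 1)) (deriv dgP (z + 1)) z := by
    have h := (dgP_differentiableAt hz1U).hasDerivAt
    simpa [Function.comp_def] using h.comp z ((hasDerivAt_id z).add_const 1)
  have hne1 : z ≠ -1 := by
    intro h
    exact hz1 (by rw [h]; ring)
  have hEq : (fun w => dgP (w + 1)) =ᶠ[𝓝 z] fun w => (w + 1) * dgP w := by
    have hopen : IsOpen {w : ℂ | w ≠ -1} := isOpen_ne
    filter_upwards [hopen.mem_nhds hne1] with w hw
    have hw1 : w + 1 ≠ 0 := fun h => hw (by linear_combination h)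
    show dgP (w + 1) = (w + 1) * dgP w
    unfold dgP
    rw [show w + 1 + 1 = (w + 1) + 1 by ring, Complex.Gamma_add_one _ hw1]
  have hQ' : HasDerivAt (fun w => (w + 1) * dgP w) (deriv dgP (z + 1)) z :=
    hQ.congr_of_eventuallyEq hEq.symm
  have hQ'' : HasDerivAt (fun w => (w + 1) * dgP w) (1 * dgP z + (z + 1) * deriv dgP z) z :=
    ((hasDerivAt_id z).add_const 1).mul hPz
  have huniq : deriv dgP (z + 1) = dgP z + (z + 1) * deriv dgP z := by
    have := hQ'.unique hQ''
    linear_combination this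
  have hPshift : dgP (z + 1) = (z + 1) * dgP z := by
    unfold dgP
    rw [show z + 1 + 1 = (z + 1) + 1 by ring, Complex.Gamma_add_one _ hz1]
  unfold dgG
  rw [huniq, hPshift]
  field_simp [dgP_ne_zero hz]
  ring

lemma dgG_rec_nat {z : ℂ} (hz : z ∈ dgU) (N : ℕ) :
    dgG z = dgG (z + N) - ∑ n ∈ Finset.range N, 1 / (z + (n : ℂ) + 1) := by
  induction N with
  | zero => simp
  | succ k ih =>
      rw [ih, Finset.sum_range_succ]
      have h1 := dgG_rec (dgU_add_nat hz k)
      rw [show z + ((k+1 : ℕ) : ℂ) = z + (k:ℂ) + 1 by push_cast; ring, h1]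
      ring

-- real digamma of Gamma(x+1)
noncomputable def rf (y : ℝ) : ℝ := Real.log (Real.Gamma y)

lemma real_mem_dgU {x : ℝ} (hx : 0 < x) : (x : ℂ) ∈ dgU := by
  rw [mem_dgU]
  intro n hn h
  have : x = -(n:ℝ) := by exact_mod_cast h
  have : (0:ℝ) < -(n:ℝ) := this ▸ hx
  have : (n:ℝ) ≥ 1 := by exact_mod_cast hn
  linarith

lemma pos_ne_neg_nat {y : ℝ} (hy : 0 < y) (m : ℕ) : y ≠ -(m:ℝ) := by
  intro h
  have h2 : (0:ℝ) ≤ (m:ℝ) := Nat.cast_nonneg m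
  rw [h] at hy
  linarith

lemma rf_differentiableAt {y : ℝ} (hy : 0 < y) : DifferentiableAt ℝ rf y := by
  exact (Real.differentiableAt_Gamma (pos_ne_neg_nat hy)).log
    (Real.Gamma_ne_zero (pos_ne_neg_nat hy))

lemma deriv_rf {y : ℝ} (hy : 0 < y) :
    deriv rf y = deriv Real.Gamma y / Real.Gamma y := by
  unfold rf
  exact deriv.log (Real.differentiableAt_Gamma (pos_ne_neg_nat hy))
    (Real.Gamma_pos_of_pos hy).ne'

/-- identification with the real logarithmic derivative -/
lemma dgG_real {x : ℝ} (hx : 0 < x) : dgG (x : ℂ) = ((deriv rf (x + 1) : ℝ) : ℂ) := by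
  have hxU := real_mem_dgU hx
  have hPx := (dgP_differentiableAt hxU).hasDerivAt
  have h1 : HasDerivAt (fun t : ℝ => dgP (t : ℂ)) (deriv dgP (x : ℂ)) x := hPx.comp_ofReal
  have hrG : HasDerivAt (fun t : ℝ => Real.Gamma (t + 1)) (deriv Real.Gamma (x + 1)) x := by
    have h := (Real.differentiableAt_Gamma (s := x + 1)
      (pos_ne_neg_nat (by linarith))).hasDerivAt
    simpa [Function.comp_def] using h.comp x ((hasDerivAt_id x).add_const 1)
  have h2 : HasDerivAt (fun t : ℝ => dgP (t : ℂ)) ((deriv Real.Gamma (x + 1) : ℝ) : ℂ) x := by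
    have h3 := hrG.ofReal_comp
    refine h3.congr_of_eventuallyEq (Filter.Eventually.of_forall fun t => ?_)
    show Complex.Gamma ((t:ℂ) + 1) = ((Real.Gamma (t + 1) : ℝ) : ℂ)
    rw [show (t : ℂ) + 1 = ((t + 1 : ℝ) : ℂ) by push_cast; ring, Complex.Gamma_ofReal]
  have huniq : deriv dgP (x : ℂ) = ((deriv Real.Gamma (x + 1) : ℝ) : ℂ) := h1.unique h2
  unfold dgG
  rw [huniq, deriv_rf (by linarith)]
  unfold dgP
  rw [show (x : ℂ) + 1 = ((x + 1 : ℝ) : ℂ) by push_cast; ring, Complex.Gamma_ofReal]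
  push_cast
  ring

/-- trapping of the real digamma -/
lemma deriv_rf_bounds {y : ℝ} (hy : 1 < y) :
    Real.log (y - 1) ≤ deriv rf y ∧ deriv rf y ≤ Real.log y := by
  have hc : ConvexOn ℝ (Ioi 0) rf := by
    have := Real.convexOn_log_Gamma
    exact this
  have hy0 : (0:ℝ) < y := by linarith
  have h_rec : ∀ t : ℝ, 0 < t → rf (t + 1) = rf t + Real.log t := by
    intro t ht
    unfold rf
    rw [Real.Gamma_add_one ht.ne', Real.log_mul ht.ne' (Real.Gamma_pos_of_pos ht).ne']
    ring
  constructor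
  · have h := hc.slope_le_deriv (mem_Ioi.mpr (by linarith : (0:ℝ) < y - 1))
      (mem_Ioi.mpr hy0) (by linarith) (rf_differentiableAt hy0)
    rw [slope_def_field] at h
    have h2 : rf y - rf (y - 1) = Real.log (y - 1) := by
      have := h_rec (y - 1) (by linarith)
      rw [show y - 1 + 1 = y by ring] at this
      linarith
    calc Real.log (y - 1) = (rf y - rf (y - 1)) / (y - (y - 1)) := by
          rw [h2]; norm_num
      _ ≤ deriv rf y := h
  · have h := hc.deriv_le_slope (mem_Ioi.mpr hy0)
      (mem_Ioi.mpr (by linarith : (0:ℝ) < y + 1)) (by linarith) (rf_differentiableAt hy0)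
    rw [slope_def_field] at h
    have h2 : rf (y + 1) - rf y = Real.log y := by
      have := h_rec y hy0
      linarith
    calc deriv rf y ≤ (rf (y + 1) - rf y) / (y + 1 - y) := h
      _ = Real.log y := by rw [h2]; norm_num

lemma dg_partial_sum (z : ℂ) (N : ℕ) :
    ∑ n ∈ Finset.range N, dgF n z
      = ((Real.log ((N:ℝ) + 1) : ℝ) : ℂ) - ∑ n ∈ Finset.range N, 1 / (z + (n:ℂ) + 1) := by
  have h1 : ∀ n : ℕ, dgF n z
      = -(1 / (z + (n:ℂ) + 1))
        + (((Real.log (((n+1:ℕ):ℝ) + 1) : ℝ) : ℂ) - ((Real.log (((n:ℕ):ℝ) + 1) : ℝ) : ℂ)) := by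
    intro n
    unfold dgF
    push_cast
    ring_nf
  rw [Finset.sum_congr rfl fun n _ => h1 n, Finset.sum_add_distrib,
    Finset.sum_range_sub (f := fun n : ℕ => ((Real.log (((n:ℕ):ℝ) + 1) : ℝ) : ℂ))]
  simp only [Nat.cast_zero, zero_add, Real.log_one, Complex.ofReal_zero, sub_zero]
  rw [Finset.sum_neg_distrib]
  ring

lemma tendsto_log_ratio {a b : ℝ} (ha : 0 < a) (hb : 0 < b) :
    Tendsto (fun N : ℕ => Real.log ((N:ℝ) + a) - Real.log ((N:ℝ) + b)) atTop (𝓝 0) := by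
  have h1 : Tendsto (fun N : ℕ => ((N:ℝ) + a) / ((N:ℝ) + b)) atTop (𝓝 1) := by
    have h2 : Tendsto (fun N : ℕ => 1 + (a - b) / ((N:ℝ) + b)) atTop (𝓝 (1 + 0)) := by
      refine tendsto_const_nhds.add ?_
      exact Tendsto.div_atTop tendsto_const_nhds
        (tendsto_atTop_add_const_right _ b tendsto_natCast_atTop_atTop)
    rw [add_zero] at h2
    refine h2.congr' ?_
    filter_upwards [eventually_gt_atTop 0] with N _
    have hNb : (0:ℝ) < (N:ℝ) + b := by positivity
    field_simp
    ring
  have h3 := ((Real.continuousAt_log one_ne_zero).tendsto.comp h1)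
  rw [Real.log_one] at h3
  refine h3.congr' ?_
  filter_upwards [eventually_gt_atTop 0] with N _
  have hNa : (0:ℝ) < (N:ℝ) + a := by positivity
  have hNb : (0:ℝ) < (N:ℝ) + b := by positivity
  simp only [Function.comp_apply]
  rw [Real.log_div hNa.ne' hNb.ne']

lemma dgD_eq_dgG_real {x : ℝ} (hx : 0 < x) : dgD (x : ℂ) = dgG (x : ℂ) := by
  have hxU := real_mem_dgU hx
  have hsum := (dg_summable_norm (x:ℂ)).of_norm
  have ht1 : Tendsto (fun N => ∑ n ∈ Finset.range N, dgF n (x:ℂ)) atTop (𝓝 (dgD (x:ℂ))) :=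
    hsum.hasSum.tendsto_sum_nat
  -- real error sequence
  have hbnd : ∀ N : ℕ, Real.log ((N:ℝ) + 1) - Real.log (x + (N:ℝ) + 1)
      ≤ Real.log ((N:ℝ) + 1) - deriv rf (x + (N:ℝ) + 1)
      ∧ Real.log ((N:ℝ) + 1) - deriv rf (x + (N:ℝ) + 1)
      ≤ Real.log ((N:ℝ) + 1) - Real.log (x + (N:ℝ)) := by
    intro N
    have h := deriv_rf_bounds (y := x + (N:ℝ) + 1) (by have := Nat.cast_nonneg (α := ℝ) N; linarith)
    have h' : x + (N:ℝ) + 1 - 1 = x + (N:ℝ) := by ring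
    rw [h'] at h
    constructor <;> linarith [h.1, h.2]
  have hlo : Tendsto (fun N : ℕ => Real.log ((N:ℝ) + 1) - Real.log (x + (N:ℝ) + 1)) atTop (𝓝 0) := by
    have := tendsto_log_ratio (a := 1) (b := x + 1) one_pos (by linarith)
    refine this.congr fun N => ?_
    ring_nf
  have hhi : Tendsto (fun N : ℕ => Real.log ((N:ℝ) + 1) - Real.log (x + (N:ℝ))) atTop (𝓝 0) := by
    have := tendsto_log_ratio (a := 1) (b := x) one_pos hx
    refine this.congr fun N => ?_
    ring_nf
  have herr : Tendsto (fun N : ℕ => Real.log ((N:ℝ) + 1) - deriv rf (x + (N:ℝ) + 1)) atTop (𝓝 0) :=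
    tendsto_of_tendsto_of_tendsto_of_le_of_le hlo hhi
      (fun N => (hbnd N).1) (fun N => (hbnd N).2)
  have ht2 : Tendsto (fun N => ∑ n ∈ Finset.range N, dgF n (x:ℂ)) atTop (𝓝 (dgG (x:ℂ))) := by
    have hform : ∀ N : ℕ, ∑ n ∈ Finset.range N, dgF n (x:ℂ)
        = dgG (x:ℂ) + ((Real.log ((N:ℝ) + 1) - deriv rf (x + (N:ℝ) + 1) : ℝ) : ℂ) := by
      intro N
      rw [dg_partial_sum]
      have hrec := dgG_rec_nat hxU N
      have hshift : dgG ((x:ℂ) + (N:ℕ)) = ((deriv rf (x + (N:ℝ) + 1) : ℝ) : ℂ) := by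
        rw [show (x:ℂ) + ((N:ℕ):ℂ) = (((x + (N:ℝ)) : ℝ) : ℂ) by push_cast; ring,
          dgG_real (by positivity)]
      rw [Complex.ofReal_sub, hrec, ← hshift]
      ring
    rw [funext hform]
    have h0 : Tendsto (fun N : ℕ =>
        ((Real.log ((N:ℝ) + 1) - deriv rf (x + (N:ℝ) + 1) : ℝ) : ℂ)) atTop (𝓝 ((0:ℝ):ℂ)) :=
      (Complex.continuous_ofReal.tendsto 0).comp herr
    simpa using tendsto_const_nhds.add h0
  exact tendsto_nhds_unique ht1 ht2

lemma dgD_eq_dgG {z : ℂ} (hz : z ∈ dgU) : dgD z = dgG z := by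
  have h2U : (2:ℂ) ∈ dgU := by
    have := real_mem_dgU (by norm_num : (0:ℝ) < 2)
    simpa using this
  have htend : Tendsto (fun k : ℕ => (((2 + ((k:ℝ)+1)⁻¹ : ℝ)) : ℂ)) atTop (𝓝[≠] (2:ℂ)) := by
    rw [tendsto_nhdsWithin_iff]
    constructor
    · have h0 : Tendsto (fun k : ℕ => ((k:ℝ)+1)⁻¹) atTop (𝓝 0) := by
        have := tendsto_one_div_add_atTop_nhds_zero_nat (𝕜 := ℝ)
        simpa [one_div] using this
      have hr : Tendsto (fun k : ℕ => (2 + ((k:ℝ)+1)⁻¹ : ℝ)) atTop (𝓝 2) := by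
        simpa using tendsto_const_nhds.add h0
      have h4 := (Complex.continuous_ofReal.tendsto (2:ℝ)).comp hr
      have h5 : (Complex.ofReal ∘ fun k : ℕ => (2 + ((k:ℝ)+1)⁻¹ : ℝ))
          = fun k : ℕ => (((2 + ((k:ℝ)+1)⁻¹ : ℝ)) : ℂ) := rfl
      rw [h5] at h4
      simpa using h4
    · filter_upwards with k
      simp only [mem_compl_iff, mem_singleton_iff]
      intro h
      have h2 : (2 + ((k:ℝ)+1)⁻¹ : ℝ) = 2 := by exact_mod_cast h
      have hk : (0:ℝ) < ((k:ℝ)+1)⁻¹ := by positivity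
      linarith
  have hfreq : ∃ᶠ w in 𝓝[≠] (2:ℂ), dgD w = dgG w :=
    htend.frequently (Frequently.of_forall fun k => dgD_eq_dgG_real (by positivity))
  exact dgD_analytic.eqOn_of_preconnected_of_frequently_eq dgG_analytic preconnected_dgU h2U hfreq hz

/-- For `s` not a negative integer, the logarithmic derivative of `Π(s) := Γ(s+1)` is the
absolutely convergent series `∑_{n ≥ 1} (-1/(s+n) + log(n+1) - log n)`. -/
theorem digamma_series (s : ℂ) (hs : ∀ n : ℕ, 1 ≤ n → s ≠ -(n : ℂ)) :
    (Summable fun n : ℕ =>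
      ‖-1 / (s + ((n : ℂ) + 1)) + (Real.log ((n : ℝ) + 2) : ℂ) - (Real.log ((n : ℝ) + 1) : ℂ)‖) ∧
    HasSum
      (fun n : ℕ =>
        -1 / (s + ((n : ℂ) + 1)) + (Real.log ((n : ℝ) + 2) : ℂ) - (Real.log ((n : ℝ) + 1) : ℂ))
      (deriv (fun z : ℂ => Complex.Gamma (z + 1)) s / Complex.Gamma (s + 1)) := by
  have hsU : s ∈ dgU := mem_dgU.mpr hs
  have h1 : Summable fun n : ℕ => ‖dgF n s‖ := dg_summable_norm s
  have h2 : HasSum (fun n : ℕ => dgF n s) (dgG s) := by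
    have h3 := h1.of_norm.hasSum
    rwa [show (∑' n, dgF n s) = dgG s from dgD_eq_dgG hsU] at h3
  exact ⟨h1, h2⟩

end DigammaSeriesAux
end

section
/- For every real x with |x| < 1 (equivalently for x = p^{-s} with p prime and s > 0), one has x = -Σ_{n=1}^{∞} (μ(n)/n)·log(1 - xⁿ), the series converging absolutely; equivalently, e^x = Π_{n=1}^{∞} (1 - xⁿ)^{-μ(n)/n}. -/
open ArithmeticFunction

private def divEquiv : ℕ × ℕ ≃ (Σ m : ℕ, {p : ℕ × ℕ // p ∈ Nat.divisorsAntidiagonal (m + 1)}) where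
  toFun p := ⟨(p.1 + 1) * (p.2 + 1) - 1, ⟨(p.1 + 1, p.2 + 1), by
    have h1 : 1 ≤ (p.1 + 1) * (p.2 + 1) := Nat.one_le_iff_ne_zero.2 (by positivity)
    rw [Nat.mem_divisorsAntidiagonal]
    simp only []
    omega⟩⟩
  invFun t := (t.2.1.1 - 1, t.2.1.2 - 1)
  left_inv p := by simp
  right_inv t := by
    obtain ⟨m, ⟨⟨a, b⟩, h⟩⟩ := t
    have h' := Nat.mem_divisorsAntidiagonal.mp h
    simp only at h'
    have ha : a ≠ 0 := by rintro rfl; omega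
    have hb : b ≠ 0 := by rintro rfl; omega
    obtain ⟨a', rfl⟩ := Nat.exists_eq_succ_of_ne_zero ha
    obtain ⟨b', rfl⟩ := Nat.exists_eq_succ_of_ne_zero hb
    have hm : m = (a' + 1) * (b' + 1) - 1 := by rw [h'.1]; omega
    subst hm
    simp

/-- For `|x| < 1`, `x = -∑_{n ≥ 1} (μ(n)/n)·log(1 - xⁿ)`, the series converging absolutely. -/
theorem moebius_log_series (x : ℝ) (hx : |x| < 1) :
    (Summable fun n : ℕ =>
      ‖((moebius (n + 1) : ℝ) / ((n : ℝ) + 1)) * Real.log (1 - x ^ (n + 1))‖) ∧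
    x = -∑' n : ℕ, ((moebius (n + 1) : ℝ) / ((n : ℝ) + 1)) * Real.log (1 - x ^ (n + 1)) := by
  set s : ℕ × ℕ → ℝ := fun p =>
    (moebius (p.1 + 1) : ℝ) / (((p.1 : ℝ) + 1) * ((p.2 : ℝ) + 1)) * x ^ ((p.1 + 1) * (p.2 + 1))
    with hs_def
  have hμ : ∀ m : ℕ, |(moebius m : ℝ)| ≤ 1 := fun m => by
    exact_mod_cast (by exact_mod_cast ArithmeticFunction.abs_moebius_le_one :
      |(moebius m : ℤ)| ≤ 1)
  -- absolute summability of s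
  have habs : ∀ p : ℕ × ℕ, ‖s p‖ ≤ |x| * (|x| ^ p.1 * |x| ^ p.2) := by
    rintro ⟨n, k⟩
    have h1 : ‖s (n, k)‖ ≤ |x| ^ ((n + 1) * (k + 1)) := by
      rw [hs_def]
      simp only [norm_mul, norm_div, norm_pow, Real.norm_eq_abs]
      have hq : |(moebius (n + 1) : ℝ)| / (|(n : ℝ) + 1| * |(k : ℝ) + 1|) ≤ 1 := by
        rw [div_le_one (by positivity)]
        refine (hμ (n + 1)).trans ?_
        rw [abs_of_pos (by positivity), abs_of_pos (by positivity)]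
        nlinarith [Nat.cast_nonneg (α := ℝ) n, Nat.cast_nonneg (α := ℝ) k]
      calc |(moebius (n + 1) : ℝ)| / (|(n : ℝ) + 1| * |(k : ℝ) + 1|) * |x| ^ ((n + 1) * (k + 1))
          ≤ 1 * |x| ^ ((n + 1) * (k + 1)) := mul_le_mul_of_nonneg_right hq (by positivity)
        _ = |x| ^ ((n + 1) * (k + 1)) := one_mul _
    have h2 : |x| ^ ((n + 1) * (k + 1)) ≤ |x| ^ (n + k + 1) :=
      pow_le_pow_of_le_one (abs_nonneg x) hx.le (by nlinarith)
    calc ‖s (n, k)‖ ≤ |x| ^ (n + k + 1) := h1.trans h2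
      _ = |x| * (|x| ^ n * |x| ^ k) := by ring
  have hgeo : Summable fun p : ℕ × ℕ => |x| * (|x| ^ p.1 * |x| ^ p.2) :=
    ((summable_geometric_of_lt_one (abs_nonneg x) hx).mul_of_nonneg
      (summable_geometric_of_lt_one (abs_nonneg x) hx)
      (fun n => by positivity) (fun n => by positivity)).mul_left _
  have hsnorm : Summable fun p : ℕ × ℕ => ‖s p‖ :=
    Summable.of_nonneg_of_le (fun p => norm_nonneg _) habs hgeo
  have hs : Summable s := hsnorm.of_norm
  -- inner sums
  have hxn : ∀ n : ℕ, |x ^ (n + 1)| < 1 := fun n => by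
    rw [abs_pow]; exact pow_lt_one₀ (abs_nonneg x) hx n.succ_ne_zero
  have hinner : ∀ n : ℕ, HasSum (fun k => s (n, k))
      ((moebius (n + 1) : ℝ) / ((n : ℝ) + 1) * (-Real.log (1 - x ^ (n + 1)))) := by
    intro n
    have h := (Real.hasSum_pow_div_log_of_abs_lt_one (hxn n)).mul_left
      ((moebius (n + 1) : ℝ) / ((n : ℝ) + 1))
    convert h using 2 with k
    · rfl
    rw [hs_def]
    simp only [← pow_mul]
    have hk : ((k : ℝ) + 1) ≠ 0 := by positivity
    have hn : ((n : ℝ) + 1) ≠ 0 := by positivity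
    field_simp
  -- the double sum equals the target series
  have hsum1 : ∑' p : ℕ × ℕ, s p =
      -∑' n : ℕ, ((moebius (n + 1) : ℝ) / ((n : ℝ) + 1)) * Real.log (1 - x ^ (n + 1)) := by
    rw [hs.tsum_prod' (fun n => (hinner n).summable), ← tsum_neg]
    congr 1
    ext n
    rw [(hinner n).tsum_eq]
    ring
  -- summability of the norm of the target series
  have hnorm_target : Summable fun n : ℕ =>
      ‖((moebius (n + 1) : ℝ) / ((n : ℝ) + 1)) * Real.log (1 - x ^ (n + 1))‖ := by
    have h0 : 0 ≤ fun p : ℕ × ℕ => ‖s p‖ := fun p => norm_nonneg _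
    have hps := (summable_prod_of_nonneg h0).mp hsnorm
    refine hps.2.of_nonneg_of_le (fun n => norm_nonneg _) (fun n => ?_)
    have h1 : ‖∑' k, s (n, k)‖ ≤ ∑' k, ‖s (n, k)‖ :=
      norm_tsum_le_tsum_norm (hsnorm.prod_factor n)
    have h2 : ((moebius (n + 1) : ℝ) / ((n : ℝ) + 1)) * Real.log (1 - x ^ (n + 1)) =
        -∑' k, s (n, k) := by rw [(hinner n).tsum_eq]; ring
    rw [h2, norm_neg]
    exact h1
  -- reindex by m = (n+1)(k+1) - 1
  set g : (Σ m : ℕ, {p : ℕ × ℕ // p ∈ Nat.divisorsAntidiagonal (m + 1)}) → ℝ :=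
    fun t => (moebius t.2.1.1 : ℝ) / ((t.1 : ℝ) + 1) * x ^ (t.1 + 1) with hg_def
  have hcomp : s = g ∘ divEquiv := by
    funext p
    obtain ⟨n, k⟩ := p
    have h1 : 1 ≤ (n + 1) * (k + 1) := Nat.one_le_iff_ne_zero.2 (by positivity)
    have h2 : (n + 1) * (k + 1) - 1 + 1 = (n + 1) * (k + 1) := by omega
    have h3 : ((((n + 1) * (k + 1) - 1 : ℕ) : ℝ)) + 1 = ((n : ℝ) + 1) * ((k : ℝ) + 1) := by
      rw [Nat.cast_sub h1]
      push_cast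
      ring
    simp only [Function.comp_apply, divEquiv, Equiv.coe_fn_mk, hs_def, hg_def, h2, h3]
  have hg : Summable g := by
    rw [hcomp] at hs
    exact divEquiv.summable_iff.mp hs
  -- key: sum of moebius over divisors
  have key : ∀ m : ℕ, ∑ p ∈ Nat.divisorsAntidiagonal (m + 1), (moebius p.1 : ℝ) =
      if m + 1 = 1 then 1 else 0 := by
    intro m
    have h := congrArg (fun f : ArithmeticFunction ℝ => f (m + 1))
      (ArithmeticFunction.coe_moebius_mul_coe_zeta (R := ℝ))
    simp only [ArithmeticFunction.mul_apply, ArithmeticFunction.one_apply] at h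
    rw [← h]
    refine Finset.sum_congr rfl (fun p hp => ?_)
    have h2 := Nat.right_ne_zero_of_mem_divisorsAntidiagonal hp
    simp [ArithmeticFunction.natCoe_apply, ArithmeticFunction.intCoe_apply,
      ArithmeticFunction.zeta_apply, h2]
  have hsum2 : ∑' p : ℕ × ℕ, s p = x := by
    have step1 : ∑' p : ℕ × ℕ, s p = ∑' t, g t :=
      (tsum_congr fun p => by rw [hcomp]; rfl).trans (divEquiv.tsum_eq g)
    rw [step1, hg.tsum_sigma]
    have hfib : ∀ m : ℕ, ∑' (c : {p : ℕ × ℕ // p ∈ Nat.divisorsAntidiagonal (m + 1)}),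
        g ⟨m, c⟩ = (if m + 1 = 1 then 1 else 0) * (x ^ (m + 1) / ((m : ℝ) + 1)) := by
      intro m
      rw [hg_def]
      rw [Finset.tsum_subtype (Nat.divisorsAntidiagonal (m + 1))
        (fun p => (moebius p.1 : ℝ) / ((m : ℝ) + 1) * x ^ (m + 1))]
      rw [← key m, Finset.sum_mul]
      refine Finset.sum_congr rfl (fun p hp => ?_)
      ring
    rw [tsum_congr hfib]
    rw [tsum_eq_single 0 (fun m hm => by simp [Nat.succ_ne_succ, hm])]
    simp
  exact ⟨hnorm_target, by rw [← hsum1, hsum2]⟩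
end

section
/- For every real s > 1, the prime zeta function satisfies P(s) = Σ_{n=1}^{∞} (μ(n)/n)·log ζ(ns), the series on the right converging absolutely; equivalently, e^{P(s)} = Π_{n=1}^{∞} ζ(ns)^{μ(n)/n}. -/
open ArithmeticFunction

/-- The prime zeta function `P(s) = ∑_p p^{-s}`. -/
noncomputable def primeZeta (s : ℝ) : ℝ := ∑' p : Nat.Primes, (p : ℝ) ^ (-s)

private lemma neg_log_le_two_mul {t : ℝ} (h0 : 0 ≤ t) (h : t ≤ 1/2) :
    -Real.log (1 - t) ≤ 2 * t := by
  have h1 : (0:ℝ) < 1 - t := by linarith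
  have h4 := Real.log_le_sub_one_of_pos (x := (1-t)⁻¹) (by positivity)
  rw [Real.log_inv] at h4
  have h2 : (1-t)⁻¹ - 1 = t / (1-t) := by field_simp; ring
  rw [h2] at h4
  have h3 : t / (1 - t) ≤ 2 * t := by rw [div_le_iff₀ h1]; nlinarith
  linarith

private lemma neg_log_nonneg {t : ℝ} (h0 : 0 ≤ t) (h : t < 1) : 0 ≤ -Real.log (1 - t) := by
  have : Real.log (1 - t) ≤ 0 := Real.log_nonpos (by linarith) (by linarith)
  linarith

private lemma prime_rpow_pos {x : ℝ} (p : Nat.Primes) : 0 < (p:ℝ) ^ (-x) := by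
  have : (0:ℝ) < (p:ℝ) := by exact_mod_cast p.2.pos
  positivity

private lemma prime_rpow_le_half {x : ℝ} (hx : 1 ≤ x) (p : Nat.Primes) :
    (p:ℝ) ^ (-x) ≤ 1/2 := by
  have h2 : (2:ℝ) ≤ (p:ℝ) := by exact_mod_cast p.2.two_le
  calc (p:ℝ) ^ (-x) ≤ (2:ℝ) ^ (-x) := by
        rw [Real.rpow_neg (by norm_num), Real.rpow_neg (by positivity)]
        exact inv_anti₀ (Real.rpow_pos_of_pos (by norm_num) _)
          (Real.rpow_le_rpow (by norm_num) h2 (by linarith))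
    _ ≤ (2:ℝ) ^ (-1:ℝ) := Real.rpow_le_rpow_of_exponent_le (by norm_num) (by linarith)
    _ = 1/2 := by rw [Real.rpow_neg_one]; norm_num

private lemma summable_neg_log {x : ℝ} (hx : 1 < x) :
    Summable (fun p : Nat.Primes => -Real.log (1 - (p:ℝ) ^ (-x))) := by
  refine Summable.of_nonneg_of_le (fun p => neg_log_nonneg (prime_rpow_pos p).le
      (lt_of_le_of_lt (prime_rpow_le_half hx.le p) (by norm_num)))
    (fun p => neg_log_le_two_mul (prime_rpow_pos p).le (prime_rpow_le_half hx.le p)) ?_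
  exact (Nat.Primes.summable_rpow.mpr (by linarith)).mul_left 2

private lemma logZeta_hasSum {x : ℝ} (hx : 1 < x) :
    HasSum (fun p : Nat.Primes => -Real.log (1 - (p : ℝ) ^ (-x)))
      (Real.log ((riemannZeta (x:ℂ)).re)) := by
  have hsum := summable_neg_log hx
  have hre : (1:ℝ) < (x:ℂ).re := by simpa using hx
  have hEP := riemannZeta_eulerProduct_exp_log hre
  have hterm : ∀ p : Nat.Primes, -Complex.log (1 - (p:ℂ) ^ (-(x:ℂ)))
      = ((-Real.log (1 - (p:ℝ) ^ (-x)) : ℝ) : ℂ) := by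
    intro p
    have hp0 : (0:ℝ) ≤ ((p:ℕ):ℝ) := by positivity
    have h2 : ((p:ℕ):ℂ) ^ (-(x:ℂ)) = (((p:ℝ) ^ (-x) : ℝ) : ℂ) := by
      rw [← Complex.ofReal_natCast, ← Complex.ofReal_neg, ← Complex.ofReal_cpow hp0]
    rw [h2, show (1 : ℂ) - (((p:ℝ) ^ (-x) : ℝ) : ℂ)
        = (((1 - (p:ℝ) ^ (-x) : ℝ)) : ℂ) by push_cast; ring,
      ← Complex.ofReal_log (by have := prime_rpow_le_half hx.le p; linarith)]
    push_cast
    ring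
  rw [funext hterm] at hEP
  rw [← Complex.ofReal_tsum] at hEP
  have hre2 : (riemannZeta (x:ℂ)).re
      = Real.exp (∑' p : Nat.Primes, -Real.log (1 - (p:ℝ) ^ (-x))) := by
    rw [← hEP, Complex.exp_ofReal_re]
  rw [hre2, Real.log_exp]
  exact hsum.hasSum

private lemma primeZeta_nonneg (x : ℝ) : 0 ≤ primeZeta x :=
  tsum_nonneg fun p => (prime_rpow_pos p).le

private lemma logZeta_nonneg {x : ℝ} (hx : 1 < x) :
    0 ≤ Real.log ((riemannZeta (x:ℂ)).re) :=
  hasSum_le (fun p => neg_log_nonneg (prime_rpow_pos p).le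
    (lt_of_le_of_lt (prime_rpow_le_half hx.le p) (by norm_num))) hasSum_zero (logZeta_hasSum hx)

private lemma logZeta_le {x : ℝ} (hx : 1 < x) :
    Real.log ((riemannZeta (x:ℂ)).re) ≤ 2 * primeZeta x := by
  refine hasSum_le (fun p => neg_log_le_two_mul (prime_rpow_pos p).le
    (prime_rpow_le_half hx.le p)) (logZeta_hasSum hx) ?_
  exact ((Nat.Primes.summable_rpow.mpr (by linarith)).hasSum.mul_left 2)

private lemma logZeta_hasSum_pairs {x : ℝ} (hx : 1 < x) :
    HasSum (fun pk : Nat.Primes × ℕ =>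
        ((pk.1 : ℝ) ^ (-x)) ^ (pk.2 + 1) / ((pk.2 : ℝ) + 1))
      (Real.log ((riemannZeta (x:ℂ)).re)) := by
  have habs : ∀ p : Nat.Primes, |(p:ℝ) ^ (-x)| < 1 := by
    intro p
    rw [abs_of_pos (prime_rpow_pos p)]
    exact lt_of_le_of_lt (prime_rpow_le_half hx.le p) (by norm_num)
  have hinner : ∀ p : Nat.Primes,
      HasSum (fun k : ℕ => ((p:ℝ) ^ (-x)) ^ (k + 1) / ((k : ℝ) + 1))
        (-Real.log (1 - (p:ℝ) ^ (-x))) := by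
    intro p
    simpa using Real.hasSum_pow_div_log_of_abs_lt_one (habs p)
  have hnonneg : ∀ pk : Nat.Primes × ℕ,
      0 ≤ ((pk.1 : ℝ) ^ (-x)) ^ (pk.2 + 1) / ((pk.2 : ℝ) + 1) := by
    intro pk
    have := (prime_rpow_pos (x := x) pk.1).le
    positivity
  have hsum : Summable (fun pk : Nat.Primes × ℕ =>
      ((pk.1 : ℝ) ^ (-x)) ^ (pk.2 + 1) / ((pk.2 : ℝ) + 1)) := by
    refine (summable_prod_of_nonneg hnonneg).mpr ⟨fun p => (hinner p).summable, ?_⟩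
    exact Summable.congr (summable_neg_log hx) fun p => ((hinner p).tsum_eq).symm
  have h := hsum.hasSum
  rwa [Summable.tsum_prod hsum, tsum_congr (fun p => (hinner p).tsum_eq),
    (logZeta_hasSum hx).tsum_eq] at h

private lemma sum_moebius_divisors (m : ℕ) :
    (∑ d ∈ Nat.divisors m, (moebius d : ℝ)) = if m = 1 then 1 else 0 := by
  have h := congrArg (fun f : ArithmeticFunction ℤ => f m) moebius_mul_coe_zeta
  simp only [coe_mul_zeta_apply, one_apply] at h
  have h2 : (∑ d ∈ Nat.divisors m, (moebius d : ℝ))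
      = ((∑ d ∈ Nat.divisors m, moebius d : ℤ) : ℝ) := by push_cast; rfl
  rw [h2, h]
  split <;> norm_num

private lemma keyE (x : ℝ)
    (hsum : Summable fun q : ℕ × ℕ =>
      ((moebius q.1 : ℝ) / ((q.1 * q.2 : ℕ) : ℝ)) * x ^ (q.1 * q.2)) :
    ∑' q : ℕ × ℕ, ((moebius q.1 : ℝ) / ((q.1 * q.2 : ℕ) : ℝ)) * x ^ (q.1 * q.2) = x := by
  set f : ℕ × ℕ → ℝ :=
    fun q => ((moebius q.1 : ℝ) / ((q.1 * q.2 : ℕ) : ℝ)) * x ^ (q.1 * q.2) with hf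
  have hfib := hsum.hasSum.tsum_fiberwise (fun q : ℕ × ℕ => q.1 * q.2)
  have hval : ∀ m : ℕ, (∑' q : (fun q : ℕ × ℕ => q.1 * q.2) ⁻¹' {m}, f q)
      = if m = 1 then x else 0 := by
    intro m
    rcases eq_or_ne m 0 with rfl | hm
    · have hz : ∀ q : (fun q : ℕ × ℕ => q.1 * q.2) ⁻¹' {(0:ℕ)}, f (q : ℕ × ℕ) = 0 := by
        rintro ⟨⟨a,b⟩, hq⟩
        simp only [Set.mem_preimage, Set.mem_singleton_iff] at hq
        rcases Nat.mul_eq_zero.mp hq with rfl | rfl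
        · simp [hf]
        · simp [hf, Nat.mul_zero]
      simp only [hz, tsum_zero]
      norm_num
    · rw [show (fun q : ℕ × ℕ => q.1 * q.2) ⁻¹' {m} = ↑(Nat.divisorsAntidiagonal m) by
        ext q; simp [Nat.mem_divisorsAntidiagonal, hm]]
      rw [Finset.tsum_subtype' (Nat.divisorsAntidiagonal m) f]
      have hterm : ∀ q ∈ Nat.divisorsAntidiagonal m,
          f q = (moebius q.1 : ℝ) * (x ^ m / (m : ℝ)) := by
        intro q hq
        obtain ⟨hqm, -⟩ := Nat.mem_divisorsAntidiagonal.mp hq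
        rw [hf]
        simp only [hqm]
        ring
      rw [Finset.sum_congr rfl hterm, ← Finset.sum_mul,
        Nat.sum_divisorsAntidiagonal (fun a _ => (moebius a : ℝ)),
        sum_moebius_divisors]
      split
      · next h1 => subst h1; norm_num
      · norm_num
  rw [funext hval] at hfib
  exact hfib.unique (hasSum_ite_eq 1 x)

private def pnkEquiv : Nat.Primes × (ℕ × ℕ) ≃ ℕ × Nat.Primes × ℕ where
  toFun q := (q.2.1, q.1, q.2.2)
  invFun q := (q.2.1, (q.1, q.2.2))
  left_inv q := rfl
  right_inv q := rfl

/-- For real `s > 1`, `P(s) = ∑_{n ≥ 1} (μ(n)/n)·log ζ(ns)`, the series converging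
absolutely (for real `s > 1`, `ζ(ns)` is real, equal to its real part). -/
theorem primeZeta_eq_moebius_log_zeta (s : ℝ) (hs : 1 < s) :
    (Summable fun n : ℕ =>
      ‖((moebius (n + 1) : ℝ) / ((n : ℝ) + 1)) *
        Real.log ((riemannZeta (((n : ℂ) + 1) * s)).re)‖) ∧
    primeZeta s =
      ∑' n : ℕ, ((moebius (n + 1) : ℝ) / ((n : ℝ) + 1)) *
        Real.log ((riemannZeta (((n : ℂ) + 1) * s)).re) := by
  have hns : ∀ n : ℕ, 1 < ((n:ℝ)+1)*s := by
    intro n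
    have h0 : (0:ℝ) ≤ (n:ℝ) := n.cast_nonneg
    nlinarith
  have hcast : ∀ n : ℕ, ((n : ℂ) + 1) * (s:ℂ) = ((((n:ℝ)+1)*s : ℝ) : ℂ) := by
    intro n; push_cast; ring
  -- shorthand for log zeta values
  set L : ℕ → ℝ := fun n => Real.log ((riemannZeta (((((n:ℝ)+1)*s : ℝ)) : ℂ)).re) with hL
  -- rpow manipulation
  have hpow : ∀ (n : ℕ) (p : Nat.Primes),
      ((p:ℝ) ^ (-s)) ^ (n+1) = (p:ℝ) ^ (-(((n:ℝ)+1)*s)) := by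
    intro n p
    have hp0 : (0:ℝ) ≤ ((p:ℕ):ℝ) := by positivity
    rw [← Real.rpow_natCast ((p:ℝ) ^ (-s)) (n+1), ← Real.rpow_mul hp0]
    congr 1
    push_cast
    ring
  -- bound : primeZeta ((n+1)s) ≤ primeZeta s * (1/2)^n
  have hPle : ∀ n : ℕ, primeZeta (((n:ℝ)+1)*s) ≤ primeZeta s * (1/2)^n := by
    intro n
    have hsum1 : Summable (fun p : Nat.Primes => (p:ℝ) ^ (-(((n:ℝ)+1)*s))) :=
      Nat.Primes.summable_rpow.mpr (by have := hns n; linarith)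
    have hsum2 : Summable (fun p : Nat.Primes => (p:ℝ) ^ (-s) * (1/2)^n) :=
      (Nat.Primes.summable_rpow.mpr (by linarith)).mul_right _
    have hle : ∀ p : Nat.Primes, (p:ℝ) ^ (-(((n:ℝ)+1)*s)) ≤ (p:ℝ) ^ (-s) * (1/2)^n := by
      intro p
      rw [← hpow n p, pow_succ']
      exact mul_le_mul_of_nonneg_left
        (pow_le_pow_left₀ (prime_rpow_pos p).le (prime_rpow_le_half hs.le p) n)
        (prime_rpow_pos p).le
    calc primeZeta (((n:ℝ)+1)*s) ≤ ∑' p : Nat.Primes, (p:ℝ) ^ (-s) * (1/2)^n :=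
          hsum1.tsum_le_tsum hle hsum2
      _ = primeZeta s * (1/2)^n := tsum_mul_right
  have hLnonneg : ∀ n : ℕ, 0 ≤ L n := fun n => logZeta_nonneg (hns n)
  have hLle : ∀ n : ℕ, L n ≤ 2 * primeZeta s * (1/2)^n := by
    intro n
    calc L n ≤ 2 * primeZeta (((n:ℝ)+1)*s) := logZeta_le (hns n)
      _ ≤ 2 * (primeZeta s * (1/2)^n) := by
          have := hPle n; linarith
      _ = 2 * primeZeta s * (1/2)^n := by ring
  have hLsummable : Summable L :=
    Summable.of_nonneg_of_le hLnonneg hLle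
      (((summable_geometric_of_lt_one (r := 1/2) (by norm_num) (by norm_num)).mul_left _))
  have hmoeb : ∀ n : ℕ, |((moebius (n+1) : ℤ) : ℝ) / ((n:ℝ)+1)| ≤ 1 := by
    intro n
    have h1 : |((moebius (n+1) : ℤ) : ℝ)| ≤ 1 := by
      have : |moebius (n+1)| ≤ 1 := by
        rw [abs_moebius]
        split <;> norm_num
      calc |((moebius (n+1) : ℤ) : ℝ)| = ((|moebius (n+1)| : ℤ) : ℝ) := by push_cast; rfl
        _ ≤ 1 := by exact_mod_cast this
    rw [abs_div]
    have h2 : (1:ℝ) ≤ |(n:ℝ)+1| := by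
      rw [abs_of_pos (by positivity)]
      simp
    exact div_le_one_of_le₀ (h1.trans h2) (abs_nonneg _)
  -- the inner double sums
  set g : ℕ → Nat.Primes × ℕ → ℝ :=
    fun n pk => ((pk.1:ℝ) ^ (-(((n:ℝ)+1)*s))) ^ (pk.2+1) / ((pk.2:ℝ)+1) with hg
  have hC : ∀ n : ℕ, HasSum (g n) (L n) := fun n => logZeta_hasSum_pairs (hns n)
  have hgnonneg : ∀ (n : ℕ) (pk : Nat.Primes × ℕ), 0 ≤ g n pk := by
    intro n pk
    have := (prime_rpow_pos (x := ((n:ℝ)+1)*s) pk.1).le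
    simp only [hg]
    positivity
  have hG : Summable (fun q : ℕ × Nat.Primes × ℕ => g q.1 q.2) := by
    refine (summable_prod_of_nonneg (fun q => hgnonneg q.1 q.2)).mpr
      ⟨fun n => (hC n).summable, ?_⟩
    exact Summable.congr hLsummable fun n => ((hC n).tsum_eq).symm
  set F : ℕ × Nat.Primes × ℕ → ℝ := fun q =>
    ((moebius (q.1+1) : ℝ) / (((q.1+1) * (q.2.2+1) : ℕ) : ℝ)) *
      ((q.2.1:ℝ) ^ (-s)) ^ ((q.1+1) * (q.2.2+1)) with hFdef
  have hFrw : ∀ q : ℕ × Nat.Primes × ℕ,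
      F q = ((moebius (q.1+1) : ℝ) / ((q.1:ℝ)+1)) * g q.1 q.2 := by
    rintro ⟨n, p, k⟩
    simp only [hFdef, hg]
    rw [pow_mul, hpow n p]
    have hn : ((n:ℝ)+1) ≠ 0 := by positivity
    have hk : ((k:ℝ)+1) ≠ 0 := by positivity
    push_cast
    field_simp
  have hF : Summable F := by
    refine Summable.of_norm_bounded hG fun q => ?_
    rw [hFrw q, norm_mul, Real.norm_eq_abs, Real.norm_eq_abs,
      abs_of_nonneg (hgnonneg q.1 q.2)]
    exact mul_le_of_le_one_left (hgnonneg q.1 q.2) (hmoeb q.1)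
  have hEval1 : ∑' q : ℕ × Nat.Primes × ℕ, F q
      = ∑' n : ℕ, ((moebius (n+1) : ℝ) / ((n:ℝ)+1)) * L n := by
    rw [Summable.tsum_prod hF]
    refine tsum_congr fun n => ?_
    calc ∑' pk : Nat.Primes × ℕ, F (n, pk)
        = ∑' pk : Nat.Primes × ℕ, ((moebius (n+1):ℝ)/((n:ℝ)+1)) * g n pk :=
          tsum_congr fun pk => hFrw (n, pk)
      _ = ((moebius (n+1):ℝ)/((n:ℝ)+1)) * L n := ((hC n).mul_left _).tsum_eq
  set e : Nat.Primes × (ℕ × ℕ) ≃ ℕ × Nat.Primes × ℕ := pnkEquiv with he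
  have hFe : Summable (F ∘ e) := e.summable_iff.mpr hF
  have hEval2 : ∑' q : ℕ × Nat.Primes × ℕ, F q = primeZeta s := by
    have step1 : ∑' q : ℕ × Nat.Primes × ℕ, F q
        = ∑' p : Nat.Primes, ∑' nk : ℕ × ℕ, (F ∘ e) (p, nk) :=
      (e.tsum_eq F).symm.trans (Summable.tsum_prod hFe)
    rw [step1]
    refine tsum_congr fun p => ?_
    set x := (p:ℝ) ^ (-s) with hx
    set f : ℕ × ℕ → ℝ :=
      fun q => ((moebius q.1 : ℝ) / ((q.1 * q.2 : ℕ) : ℝ)) * x ^ (q.1 * q.2) with hfd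
    have hcomp : (fun nk : ℕ × ℕ => (F ∘ e) (p, nk))
        = fun nk : ℕ × ℕ => f (nk.1+1, nk.2+1) := rfl
    set i : ℕ × ℕ → ℕ × ℕ := fun q => (q.1+1, q.2+1) with hi
    have hiinj : Function.Injective i := by
      rintro ⟨a,b⟩ ⟨c,d⟩ h
      simp only [hi, Prod.mk.injEq] at h
      exact Prod.ext (by omega) (by omega)
    have hsupp : Function.support f ⊆ Set.range i := by
      rintro ⟨a,b⟩ ha
      rcases Nat.eq_zero_or_pos a with rfl | ha1
      · exfalso; apply ha; simp [hfd]
      rcases Nat.eq_zero_or_pos b with rfl | hb1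
      · exfalso; apply ha; simp [hfd]
      refine ⟨(a-1, b-1), ?_⟩
      simp only [hi, Prod.mk.injEq]
      omega
    have hsumfe : Summable (fun nk : ℕ × ℕ => (F ∘ e) (p, nk)) := hFe.prod_factor p
    rw [hcomp] at hsumfe
    have hfi : (fun nk : ℕ × ℕ => f (nk.1+1, nk.2+1)) = f ∘ i := rfl
    have hsumf : Summable f :=
      (hiinj.summable_iff fun q hq =>
        Classical.byContradiction fun h0 => hq (hsupp h0)).mp (hfi ▸ hsumfe)
    rw [hcomp, hfi]
    calc ∑' q : ℕ × ℕ, (f ∘ i) q = ∑' q : ℕ × ℕ, f q := hiinj.tsum_eq hsupp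
      _ = x := keyE x hsumf
  constructor
  · have hfun : (fun n : ℕ => ‖((moebius (n + 1) : ℝ) / ((n : ℝ) + 1)) *
        Real.log ((riemannZeta (((n : ℂ) + 1) * s)).re)‖)
        = fun n => ‖((moebius (n+1) : ℝ) / ((n:ℝ)+1)) * L n‖ := by
      funext n
      rw [hcast n]
    rw [hfun]
    refine Summable.of_nonneg_of_le (fun n => norm_nonneg _) (fun n => ?_)
      ((summable_geometric_of_lt_one (r := 1/2) (by norm_num) (by norm_num)).mul_left
        (2 * primeZeta s))
    rw [norm_mul, Real.norm_eq_abs, Real.norm_eq_abs, abs_of_nonneg (hLnonneg n)]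
    calc |((moebius (n+1) : ℝ)) / ((n:ℝ)+1)| * L n ≤ 1 * L n :=
          mul_le_mul_of_nonneg_right (hmoeb n) (hLnonneg n)
      _ = L n := one_mul _
      _ ≤ 2 * primeZeta s * (1/2)^n := hLle n
  · rw [← hEval2, hEval1]
    refine tsum_congr fun n => ?_
    rw [hcast n]
end

section
/- For every real s > 1, the prime zeta function P(s) = Σ_p p^{-s} is differentiable at s, with derivative P′(s) = Σ_{n=1}^{∞} μ(n)·ζ′(ns)/ζ(ns) given by an absolutely convergent series. Equivalently, P′(s) = -Σ_p (log p)·p^{-s}. -/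
open ArithmeticFunction

namespace PZaux

open Real Complex LSeries
open scoped LSeries.notation
open scoped ArithmeticFunction.Moebius ArithmeticFunction.zeta

/-- real von Mangoldt Dirichlet series -/
noncomputable def VM (x : ℝ) : ℝ := ∑' n : ℕ, Λ n * (n : ℝ) ^ (-x)

lemma term_eq {x : ℝ} (hx : 0 < x) (n : ℕ) :
    LSeries.term ↗Λ x n = ((Λ n * (n : ℝ) ^ (-x) : ℝ) : ℂ) := by
  rcases eq_or_ne n 0 with rfl | hn
  · simp [Real.zero_rpow (by linarith : -x ≠ 0)]
  · rw [LSeries.term_of_ne_zero hn, Real.rpow_neg (Nat.cast_nonneg n),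
      Complex.ofReal_mul, Complex.ofReal_inv, Complex.ofReal_cpow (Nat.cast_nonneg n),
      Complex.ofReal_natCast, div_eq_mul_inv]

lemma summable_vm {x : ℝ} (hx : 1 < x) : Summable fun n : ℕ => Λ n * (n : ℝ) ^ (-x) := by
  have h : LSeriesSummable ↗Λ (x : ℂ) :=
    ArithmeticFunction.LSeriesSummable_vonMangoldt (by simpa using hx)
  rw [LSeriesSummable] at h
  have h2 := h.congr (fun n => term_eq (by linarith) n)
  rwa [Complex.summable_ofReal] at h2

lemma vm_nonneg (x : ℝ) (n : ℕ) : 0 ≤ Λ n * (n : ℝ) ^ (-x) :=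
  mul_nonneg vonMangoldt_nonneg (Real.rpow_nonneg (Nat.cast_nonneg n) _)

lemma VM_nonneg (x : ℝ) : 0 ≤ VM x := tsum_nonneg (vm_nonneg x)

lemma zeta_quot {x : ℝ} (hx : 1 < x) :
    deriv riemannZeta (x : ℂ) / riemannZeta (x : ℂ) = ((-(VM x) : ℝ) : ℂ) := by
  have h := ArithmeticFunction.LSeries_vonMangoldt_eq_deriv_riemannZeta_div
    (s := (x : ℂ)) (by simpa using hx)
  have h2 : LSeries ↗Λ (x : ℂ) = ((VM x : ℝ) : ℂ) := by
    rw [LSeries, VM, Complex.ofReal_tsum]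
    exact tsum_congr fun n => term_eq (by linarith) n
  rw [h2] at h
  rw [Complex.ofReal_neg, h, neg_div, neg_neg]


lemma pk_val {x : ℝ} (p : Nat.Primes) (k : ℕ) :
    Λ ((p : ℕ) ^ (k + 1)) * (((p : ℕ) ^ (k + 1) : ℕ) : ℝ) ^ (-x)
      = Real.log (p : ℕ) * (p : ℝ) ^ (-(((k : ℝ) + 1) * x)) := by
  have hp : (0:ℝ) < ((p : ℕ) : ℝ) := by exact_mod_cast p.prop.pos
  rw [vonMangoldt_apply_pow (Nat.succ_ne_zero k), vonMangoldt_apply_prime p.prop]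
  congr 1
  rw [Nat.cast_pow, ← Real.rpow_natCast (((p : ℕ) : ℝ)) (k+1), ← Real.rpow_mul hp.le]
  congr 1
  push_cast; ring

lemma injective_pk : Function.Injective fun q : Nat.Primes × ℕ => (q.1 : ℕ) ^ (q.2 + 1) := by
  have h : (fun q : Nat.Primes × ℕ => (q.1 : ℕ) ^ (q.2 + 1))
      = fun q : Nat.Primes × ℕ => ((Nat.Primes.prodNatEquiv q : ℕ)) := by
    funext q
    exact (Nat.Primes.coe_prodNatEquiv_apply q.1 q.2).symm
  rw [h]
  exact Subtype.coe_injective.comp Nat.Primes.prodNatEquiv.injective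

lemma summable_pk {x : ℝ} (hx : 1 < x) :
    Summable fun q : Nat.Primes × ℕ =>
      Real.log (q.1 : ℕ) * ((q.1 : ℕ) : ℝ) ^ (-(((q.2 : ℝ) + 1) * x)) :=
  ((summable_vm hx).comp_injective injective_pk).congr fun q => pk_val q.1 q.2

lemma VM_eq_primes {x : ℝ} (hx : 1 < x) :
    VM x = ∑' q : Nat.Primes × ℕ,
      Real.log (q.1 : ℕ) * ((q.1 : ℕ) : ℝ) ^ (-(((q.2 : ℝ) + 1) * x)) := by
  rw [VM, tsum_eq_tsum_primes_of_support_subset_prime_powers (summable_vm hx)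
    (fun n hn => vonMangoldt_ne_zero_iff.mp (left_ne_zero_of_mul hn)),
    Summable.tsum_prod' (summable_pk hx) fun p => (summable_pk hx).prod_factor p]
  exact tsum_congr fun p => tsum_congr fun k => (pk_val p k)

lemma VM_le {x : ℝ} (hx : 1 < x) (n : ℕ) :
    VM (((n : ℝ) + 1) * x) ≤ VM x * ((2 : ℝ) ^ (-x)) ^ n := by
  have hx1 : (1:ℝ) < ((n:ℝ)+1) * x := by nlinarith [Nat.cast_nonneg (α := ℝ) n]
  rw [VM, VM, ← tsum_mul_right]
  refine Summable.tsum_le_tsum (fun k => ?_) (summable_vm hx1) ((summable_vm hx).mul_right _)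
  rcases lt_or_ge k 2 with hk | hk
  · interval_cases k <;>
      simp [vonMangoldt_apply_one]
  · have hk2 : (2:ℝ) ≤ (k:ℝ) := by exact_mod_cast hk
    have h0 : (0:ℝ) < (k:ℝ) := by linarith
    have e1 : (k:ℝ) ^ (-(((n:ℝ)+1) * x)) = (k:ℝ)^(-x) * ((k:ℝ)^(-x))^n := by
      rw [← Real.rpow_natCast ((k:ℝ)^(-x)) n, ← Real.rpow_mul h0.le, ← Real.rpow_add h0]
      ring_nf
    calc Λ k * (k:ℝ) ^ (-(((n:ℝ)+1) * x)) = (Λ k * (k:ℝ)^(-x)) * ((k:ℝ)^(-x))^n := by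
          rw [e1]; ring
      _ ≤ (Λ k * (k:ℝ)^(-x)) * ((2:ℝ)^(-x))^n := by
          refine mul_le_mul_of_nonneg_left (pow_le_pow_left₀ ?_ ?_ n) (vm_nonneg x k)
          · positivity
          · exact Real.rpow_le_rpow_of_nonpos two_pos hk2 (by linarith)


lemma core_summable {t : ℝ} (ht : |t| < 1) :
    Summable fun q : ℕ × ℕ => ((μ (q.2 + 1) : ℤ) : ℝ) * t ^ ((q.1 + 1) * (q.2 + 1)) := by
  apply Summable.of_abs
  have hb : Summable fun q : ℕ × ℕ => |t| ^ q.1 * |t| ^ q.2 :=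
    (summable_geometric_of_lt_one (abs_nonneg t) ht).mul_of_nonneg
      (summable_geometric_of_lt_one (abs_nonneg t) ht)
      (fun _ => pow_nonneg (abs_nonneg t) _) (fun _ => pow_nonneg (abs_nonneg t) _)
  refine Summable.of_nonneg_of_le (fun q => abs_nonneg _) (fun q => ?_) hb
  rw [abs_mul, _root_.abs_pow]
  have h1 : |((μ (q.2 + 1) : ℤ) : ℝ)| ≤ 1 := by
    rw [← Int.cast_abs]
    exact_mod_cast ArithmeticFunction.abs_moebius_le_one
  calc |((μ (q.2+1) : ℤ) : ℝ)| * |t| ^ ((q.1+1)*(q.2+1))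
      ≤ 1 * |t| ^ ((q.1+1)*(q.2+1)) :=
        mul_le_mul_of_nonneg_right h1 (pow_nonneg (abs_nonneg t) _)
    _ ≤ |t| ^ (q.1 + q.2) := by
        rw [one_mul]
        exact pow_le_pow_of_le_one (abs_nonneg t) ht.le (by nlinarith)
    _ = |t| ^ q.1 * |t| ^ q.2 := pow_add _ _ _

lemma core {t : ℝ} (ht : |t| < 1) :
    ∑' q : ℕ × ℕ, ((μ (q.2 + 1) : ℤ) : ℝ) * t ^ ((q.1 + 1) * (q.2 + 1)) = t := by
  classical
  set f : (Σ j : ℕ, {d : ℕ × ℕ // d ∈ j.divisorsAntidiagonal}) → ℝ :=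
    fun z => ((μ z.2.1.1 : ℤ) : ℝ) * t ^ z.1 with hf
  have hmem : ∀ q : ℕ × ℕ, (q.2 + 1, q.1 + 1) ∈ ((q.2 + 1) * (q.1 + 1)).divisorsAntidiagonal := by
    intro q
    rw [Nat.mem_divisorsAntidiagonal]
    exact ⟨rfl, by positivity⟩
  set i : ℕ × ℕ → (Σ j : ℕ, {d : ℕ × ℕ // d ∈ j.divisorsAntidiagonal}) :=
    fun q => ⟨(q.2 + 1) * (q.1 + 1), ⟨(q.2 + 1, q.1 + 1), hmem q⟩⟩ with hi
  have hinj : Function.Injective i := by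
    intro a b hab
    have h2 := congrArg (fun z : (Σ j : ℕ, {d : ℕ × ℕ // d ∈ j.divisorsAntidiagonal}) =>
      (z.2 : ℕ × ℕ)) hab
    change ((a.2 + 1, a.1 + 1) : ℕ × ℕ) = (b.2 + 1, b.1 + 1) at h2
    obtain ⟨h3, h4⟩ := Prod.mk.injEq .. ▸ h2
    exact Prod.ext (by omega) (by omega)
  have hsurj : ∀ z : (Σ j : ℕ, {d : ℕ × ℕ // d ∈ j.divisorsAntidiagonal}), z ∈ Set.range i := by
    rintro ⟨j, ⟨⟨x, y⟩, hxy⟩⟩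
    rw [Nat.mem_divisorsAntidiagonal] at hxy
    obtain ⟨hxyj, hj⟩ := hxy
    have hxyj' : x * y = j := hxyj
    have hx : x ≠ 0 := fun h => hj (by rw [h, zero_mul] at hxyj'; exact hxyj'.symm)
    have hy : y ≠ 0 := fun h => hj (by rw [h, mul_zero] at hxyj'; exact hxyj'.symm)
    obtain ⟨a, rfl⟩ := Nat.exists_eq_succ_of_ne_zero hx
    obtain ⟨b, rfl⟩ := Nat.exists_eq_succ_of_ne_zero hy
    subst hxyj'
    exact ⟨(b, a), rfl⟩
  have hcomp : ∀ q : ℕ × ℕ,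
      f (i q) = ((μ (q.2 + 1) : ℤ) : ℝ) * t ^ ((q.1 + 1) * (q.2 + 1)) := by
    intro q
    simp only [hf, hi]
    rw [mul_comm (q.2+1) (q.1+1)]
  have hzero : ∀ z ∉ Set.range i, f z = 0 := fun z hz => absurd (hsurj z) hz
  have hfs : Summable f := (Function.Injective.summable_iff hinj hzero).mp
    ((core_summable ht).congr (fun q => (hcomp q).symm))
  have h1 : ∑' q : ℕ × ℕ, ((μ (q.2 + 1) : ℤ) : ℝ) * t ^ ((q.1 + 1) * (q.2 + 1)) = ∑' z, f z := by
    rw [← hinj.tsum_eq (fun z _ => hsurj z)]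
    · exact tsum_congr fun q => (hcomp q).symm
  have hfin : ∀ j : ℕ, Summable fun d : {d : ℕ × ℕ // d ∈ j.divisorsAntidiagonal} =>
      f ⟨j, d⟩ := fun j => Summable.of_finite
  rw [h1, Summable.tsum_sigma' hfin hfs]
  have hinner : ∀ j : ℕ,
      (∑' d : {d : ℕ × ℕ // d ∈ j.divisorsAntidiagonal}, f ⟨j, d⟩)
        = (if j = 1 then t else 0) := by
    intro j
    have h2 : (∑' d : {d : ℕ × ℕ // d ∈ j.divisorsAntidiagonal}, f ⟨j, d⟩)
        = ∑ d ∈ j.divisorsAntidiagonal, ((μ d.1 : ℤ) : ℝ) * t ^ j :=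
      Finset.tsum_subtype (j.divisorsAntidiagonal) (fun d => ((μ d.1 : ℤ) : ℝ) * t ^ j)
    rw [h2, ← Finset.sum_mul]
    have h3 : ∑ d ∈ j.divisorsAntidiagonal, ((μ d.1 : ℤ) : ℝ)
        = (((μ * ζ : ArithmeticFunction ℤ) j : ℤ) : ℝ) := by
      rw [ArithmeticFunction.coe_mul_zeta_apply]
      push_cast
      exact Nat.sum_divisorsAntidiagonal (fun x y => ((μ x : ℤ) : ℝ))
    rw [h3, ArithmeticFunction.moebius_mul_coe_zeta]
    by_cases hj : j = 1
    · subst hj; simp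
    · simp [ArithmeticFunction.one_apply, hj]
  rw [tsum_congr hinner, tsum_ite_eq]


variable {s : ℝ}

lemma r_gt (hs : 1 < s) (n : ℕ) : 1 < ((n : ℝ) + 1) * s := by
  nlinarith [Nat.cast_nonneg (α := ℝ) n]

lemma quot_eq (hs : 1 < s) (n : ℕ) :
    deriv riemannZeta (((n : ℂ) + 1) * s) / riemannZeta (((n : ℂ) + 1) * s)
      = ((-(VM (((n : ℝ) + 1) * s)) : ℝ) : ℂ) := by
  have hpt : ((n : ℂ) + 1) * (s : ℂ) = (((((n : ℝ) + 1) * s : ℝ)) : ℂ) := by push_cast; ring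
  rw [hpt]
  exact zeta_quot (r_gt hs n)

lemma geom_summable (hs : 1 < s) : Summable fun n : ℕ => VM s * ((2 : ℝ) ^ (-s)) ^ n := by
  refine Summable.mul_left _ (summable_geometric_of_lt_one (by positivity) ?_)
  exact Real.rpow_lt_one_of_one_lt_of_neg one_lt_two (by linarith)

lemma norm_moebius_le (k : ℕ) : ‖((μ k : ℤ) : ℂ)‖ ≤ 1 := by
  rw [← Complex.ofReal_intCast, Complex.norm_real, Real.norm_eq_abs, ← Int.cast_abs]
  exact_mod_cast (ArithmeticFunction.abs_moebius_le_one (n := k))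

lemma part1 (hs : 1 < s) : Summable fun n : ℕ =>
    ‖(moebius (n + 1) : ℂ) *
      (deriv riemannZeta (((n : ℂ) + 1) * s) / riemannZeta (((n : ℂ) + 1) * s))‖ := by
  refine Summable.of_nonneg_of_le (fun n => norm_nonneg _) (fun n => ?_) (geom_summable hs)
  rw [quot_eq hs n, norm_mul, Complex.norm_real, Real.norm_eq_abs, abs_neg,
    _root_.abs_of_nonneg (VM_nonneg _)]
  calc ‖((μ (n + 1) : ℤ) : ℂ)‖ * VM (((n : ℝ) + 1) * s)
      ≤ 1 * VM (((n : ℝ) + 1) * s) :=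
        mul_le_mul_of_nonneg_right (norm_moebius_le _) (VM_nonneg _)
    _ = VM (((n : ℝ) + 1) * s) := one_mul _
    _ ≤ VM s * ((2 : ℝ) ^ (-s)) ^ n := VM_le hs n


/-- The big triple-indexed function. -/
noncomputable def T (s : ℝ) : Nat.Primes × ℕ × ℕ → ℝ := fun w =>
  ((μ (w.2.2 + 1) : ℤ) : ℝ) *
    (Real.log (w.1 : ℕ) * ((w.1 : ℕ) : ℝ) ^ (-(((w.2.1 : ℝ) + 1) * (((w.2.2 : ℝ) + 1) * s))))

/-- reindexing equiv -/
def e : ℕ × (Nat.Primes × ℕ) ≃ Nat.Primes × ℕ × ℕ :=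
  (Equiv.prodComm _ _).trans (Equiv.prodAssoc _ _ _)

lemma G_nonneg (s : ℝ) (z : ℕ × (Nat.Primes × ℕ)) :
    0 ≤ Real.log ((z.2.1 : ℕ) : ℝ) *
      ((z.2.1 : ℕ) : ℝ) ^ (-(((z.2.2 : ℝ) + 1) * (((z.1 : ℝ) + 1) * s))) := by
  have h1 : (1 : ℝ) ≤ ((z.2.1 : ℕ) : ℝ) := by exact_mod_cast z.2.1.prop.one_lt.le
  exact mul_nonneg (Real.log_nonneg h1) (Real.rpow_nonneg (by linarith) _)

set_option maxHeartbeats 1000000 in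
lemma hG (hs : 1 < s) : Summable fun z : ℕ × (Nat.Primes × ℕ) =>
    Real.log ((z.2.1 : ℕ) : ℝ) *
      ((z.2.1 : ℕ) : ℝ) ^ (-(((z.2.2 : ℝ) + 1) * (((z.1 : ℝ) + 1) * s))) := by
  rw [summable_prod_of_nonneg (fun z => G_nonneg s z)]
  constructor
  · exact fun n => summable_pk (x := ((n : ℝ) + 1) * s) (r_gt hs n)
  · refine Summable.of_nonneg_of_le (fun n => tsum_nonneg fun q => G_nonneg s (n, q))
      (fun n => ?_) (geom_summable hs)
    rw [← VM_eq_primes (r_gt hs n)]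
    exact VM_le hs n

lemma hTe (hs : 1 < s) : Summable fun z : ℕ × (Nat.Primes × ℕ) => T s (e z) := by
  refine Summable.of_abs (Summable.of_nonneg_of_le (fun _ => abs_nonneg _)
    (fun z => ?_) (hG hs))
  obtain ⟨n, p, k⟩ := z
  show |((μ (n + 1) : ℤ) : ℝ) * _| ≤ _
  rw [abs_mul]
  calc |((μ (n + 1) : ℤ) : ℝ)| * |Real.log ((p : ℕ) : ℝ) * _|
      ≤ 1 * |Real.log ((p : ℕ) : ℝ) *
        ((p : ℕ) : ℝ) ^ (-(((k : ℝ) + 1) * (((n : ℝ) + 1) * s)))| := by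
        refine mul_le_mul_of_nonneg_right ?_ (abs_nonneg _)
        rw [← Int.cast_abs]
        exact_mod_cast (ArithmeticFunction.abs_moebius_le_one (n := n + 1))
    _ = _ := by rw [one_mul, _root_.abs_of_nonneg (G_nonneg s (n, (p, k)))]

lemma inner_p (hs : 1 < s) (p : Nat.Primes) :
    ∑' v : ℕ × ℕ, T s (p, v) = Real.log (p : ℕ) * ((p : ℕ) : ℝ) ^ (-s) := by
  have hp1 : (1 : ℝ) < ((p : ℕ) : ℝ) := by exact_mod_cast p.prop.one_lt
  have hp0 : (0 : ℝ) < ((p : ℕ) : ℝ) := by linarith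
  set t : ℝ := ((p : ℕ) : ℝ) ^ (-s) with hts
  have ht0 : 0 ≤ t := Real.rpow_nonneg hp0.le _
  have ht : |t| < 1 := by
    rw [_root_.abs_of_nonneg ht0]
    exact Real.rpow_lt_one_of_one_lt_of_neg hp1 (by linarith)
  have hexp : ∀ v : ℕ × ℕ,
      ((p : ℕ) : ℝ) ^ (-(((v.1 : ℝ) + 1) * (((v.2 : ℝ) + 1) * s)))
        = t ^ ((v.1 + 1) * (v.2 + 1)) := by
    intro v
    rw [hts, ← Real.rpow_natCast (((p : ℕ) : ℝ) ^ (-s)) ((v.1 + 1) * (v.2 + 1)),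
      ← Real.rpow_mul hp0.le]
    congr 1
    push_cast
    ring
  have hcong : ∀ v : ℕ × ℕ, T s (p, v)
      = Real.log ((p : ℕ) : ℝ) * (((μ (v.2 + 1) : ℤ) : ℝ) * t ^ ((v.1 + 1) * (v.2 + 1))) := by
    intro v
    show ((μ (v.2 + 1) : ℤ) : ℝ) * _ = _
    rw [hexp v]
    ring
  rw [tsum_congr hcong, tsum_mul_left, core ht]

lemma part3 (hs : 1 < s) :
    (∑' n : ℕ, (moebius (n + 1) : ℝ) *
        (deriv riemannZeta (((n : ℂ) + 1) * s) / riemannZeta (((n : ℂ) + 1) * s)).re)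
      = -∑' p : Nat.Primes, Real.log p * (p : ℝ) ^ (-s) := by
  have hT : Summable (T s) := (e).summable_iff.mp (hTe hs)
  have step1 : ∀ n : ℕ, (moebius (n + 1) : ℝ) *
      (deriv riemannZeta (((n : ℂ) + 1) * s) / riemannZeta (((n : ℂ) + 1) * s)).re
      = -(∑' q : Nat.Primes × ℕ, T s (e (n, q))) := by
    intro n
    rw [quot_eq hs n, Complex.ofReal_re]
    have h2 : ∀ q : Nat.Primes × ℕ, T s (e (n, q))
        = ((μ (n + 1) : ℤ) : ℝ) * (Real.log ((q.1 : ℕ) : ℝ) *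
            ((q.1 : ℕ) : ℝ) ^ (-(((q.2 : ℝ) + 1) * (((n : ℝ) + 1) * s)))) := fun q => rfl
    rw [tsum_congr h2, tsum_mul_left, ← VM_eq_primes (r_gt hs n)]
    ring
  rw [tsum_congr step1, tsum_neg]
  congr 1
  rw [← Summable.tsum_prod' (hTe hs) (fun n => (hTe hs).prod_factor n), (e).tsum_eq (T s),
    Summable.tsum_prod' hT (fun p => hT.prod_factor p)]
  exact tsum_congr fun p => inner_p hs p


lemma hasDeriv_term (p : Nat.Primes) (y : ℝ) :
    HasDerivAt (fun x : ℝ => ((p : ℕ) : ℝ) ^ (-x))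
      (-(Real.log ((p : ℕ) : ℝ) * ((p : ℕ) : ℝ) ^ (-y))) y := by
  have hp : (0 : ℝ) < ((p : ℕ) : ℝ) := by exact_mod_cast p.prop.pos
  have h1 : HasDerivAt (fun x : ℝ => Real.log ((p : ℕ) : ℝ) * -x)
      (Real.log ((p : ℕ) : ℝ) * -1) y := ((hasDerivAt_id y).neg.const_mul _)
  have h2 := h1.exp
  have h3 : (fun x : ℝ => Real.exp (Real.log ((p : ℕ) : ℝ) * -x))
      = fun x : ℝ => ((p : ℕ) : ℝ) ^ (-x) :=
    funext fun x => (Real.rpow_def_of_pos hp (-x)).symm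
  rw [h3] at h2
  convert h2 using 1
  rw [Real.rpow_def_of_pos hp]
  ring

lemma deriv_part (hs : 1 < s) :
    HasDerivAt primeZeta (-∑' p : Nat.Primes, Real.log p * (p : ℝ) ^ (-s)) s := by
  rw [← tsum_neg]
  have h0 : (1 : ℝ) < (1 + s) / 2 := by linarith
  have husum : Summable fun p : Nat.Primes =>
      Real.log ((p : ℕ) : ℝ) * ((p : ℕ) : ℝ) ^ (-((1 + s) / 2)) := by
    refine ((summable_vm h0).comp_injective Subtype.coe_injective).congr fun p => ?_
    rw [Function.comp_apply, vonMangoldt_apply_prime p.prop]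
  have key := hasDerivAt_tsum_of_isPreconnected
    (u := fun p : Nat.Primes => Real.log ((p : ℕ) : ℝ) * ((p : ℕ) : ℝ) ^ (-((1 + s) / 2)))
    (g := fun (p : Nat.Primes) (x : ℝ) => ((p : ℕ) : ℝ) ^ (-x))
    (g' := fun (p : Nat.Primes) (x : ℝ) => -(Real.log ((p : ℕ) : ℝ) * ((p : ℕ) : ℝ) ^ (-x)))
    husum (isOpen_Ioi (a := (1 + s) / 2)) (isPreconnected_Ioi)
    (fun p y _ => hasDeriv_term p y)
    (fun p y hy => ?_) (show s ∈ Set.Ioi ((1 + s) / 2) by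
      rw [Set.mem_Ioi]; linarith)
    (Nat.Primes.summable_rpow.mpr (by linarith))
    (show s ∈ Set.Ioi ((1 + s) / 2) by rw [Set.mem_Ioi]; linarith)
  · have hpz : primeZeta = fun z : ℝ => ∑' p : Nat.Primes, ((p : ℕ) : ℝ) ^ (-z) := rfl
    rw [hpz]
    simpa using key
  · have hp1 : (1 : ℝ) ≤ ((p : ℕ) : ℝ) := by exact_mod_cast p.prop.one_lt.le
    have hlog : 0 ≤ Real.log ((p : ℕ) : ℝ) := Real.log_nonneg hp1
    rw [Set.mem_Ioi] at hy
    rw [norm_neg, Real.norm_eq_abs,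
      _root_.abs_of_nonneg (mul_nonneg hlog (Real.rpow_nonneg (by linarith) _))]
    exact mul_le_mul_of_nonneg_left
      (Real.rpow_le_rpow_of_exponent_le hp1 (by linarith)) hlog

end PZaux

/-- For real `s > 1`, `P` is differentiable at `s` with derivative
`P′(s) = ∑_{n ≥ 1} μ(n)·ζ′(ns)/ζ(ns)`, an absolutely convergent series; equivalently,
`P′(s) = -∑_p (log p)·p^{-s}`. -/
theorem primeZeta_hasDerivAt (s : ℝ) (hs : 1 < s) :
    (Summable fun n : ℕ =>
      ‖(moebius (n + 1) : ℂ) *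
        (deriv riemannZeta (((n : ℂ) + 1) * s) / riemannZeta (((n : ℂ) + 1) * s))‖) ∧
    HasDerivAt primeZeta
      (∑' n : ℕ, (moebius (n + 1) : ℝ) *
        (deriv riemannZeta (((n : ℂ) + 1) * s) / riemannZeta (((n : ℂ) + 1) * s)).re) s ∧
    (∑' n : ℕ, (moebius (n + 1) : ℝ) *
        (deriv riemannZeta (((n : ℂ) + 1) * s) / riemannZeta (((n : ℂ) + 1) * s)).re)
      = -∑' p : Nat.Primes, Real.log p * (p : ℝ) ^ (-s) := by
  refine ⟨PZaux.part1 hs, ?_, PZaux.part3 hs⟩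
  rw [PZaux.part3 hs]
  exact PZaux.deriv_part hs
end

section
/- For every real x > 0 with x ≠ 1, one has ∫₀^∞ x·t^{x-1}/(e^t + 1) dt = (1 - 2^{1-x})·ζ(x)·Γ(x+1), where for 0 < x < 1 the value ζ(x) is that of the analytic continuation of the Riemann zeta function. -/
open Real MeasureTheory

noncomputable def etaPhi : ZMod 2 → ℂ := fun j => if j = 0 then -1 else 1

lemma etaPhi_sum : ∑ j : ZMod 2, etaPhi j = 0 := by
  have : (Finset.univ : Finset (ZMod 2)) = {0, 1} := by decide
  rw [this, Finset.sum_insert (by decide), Finset.sum_singleton]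
  norm_num [etaPhi]

lemma etaPhi_even {n : ℕ} (hn : Even n) : etaPhi (n : ZMod 2) = -1 := by
  rw [etaPhi]
  have : (n : ZMod 2) = 0 := (ZMod.natCast_eq_zero_iff n 2).mpr hn.two_dvd
  simp [this]

lemma etaPhi_odd {n : ℕ} (hn : ¬ Even n) : etaPhi (n : ZMod 2) = 1 := by
  rw [etaPhi]
  have h : (n : ZMod 2) ≠ 0 := by
    rw [Ne, ZMod.natCast_eq_zero_iff]
    rintro ⟨c, rfl⟩
    exact hn ⟨c, by ring⟩
  simp [h]

lemma etaSeries {s : ℂ} (hs : 1 < s.re) :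
    HasSum (fun n : ℕ => LSeries.term (fun n => etaPhi n) s n)
      ((1 - 2 ^ (1 - s)) * riemannZeta s) := by
  have hs0 : s ≠ 0 := fun h => by simp [h] at hs; linarith
  set g : ℕ → ℂ := fun n => 1 / (n : ℂ) ^ s with hg
  have hg_s : Summable g := Complex.summable_one_div_nat_cpow.mpr hs
  have hgz : HasSum g (riemannZeta s) := by
    rw [zeta_eq_tsum_one_div_nat_cpow hs]; exact hg_s.hasSum
  have he : (fun k : ℕ => g (2 * k)) = fun k => (2 : ℂ) ^ (-s) * g k := by
    funext k
    have h1 : ((2 * k : ℕ) : ℂ) ^ s = (2 : ℂ) ^ s * (k : ℂ) ^ s := by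
      have := Complex.mul_cpow_ofReal_nonneg (by norm_num : (0:ℝ) ≤ 2) (Nat.cast_nonneg k) s
      push_cast at this ⊢
      exact this
    simp only [hg, h1, Complex.cpow_neg]
    ring
  have hge : HasSum (fun k : ℕ => g (2 * k)) ((2 : ℂ) ^ (-s) * riemannZeta s) := by
    rw [he]; exact hgz.mul_left _
  have hos : Summable fun k : ℕ => g (2 * k + 1) :=
    hg_s.comp_injective (fun a b h => by omega)
  have hsum : (2 : ℂ) ^ (-s) * riemannZeta s + ∑' k, g (2 * k + 1) = riemannZeta s :=
    (HasSum.even_add_odd hge hos.hasSum).unique hgz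
  have hgo : HasSum (fun k : ℕ => g (2 * k + 1))
      (riemannZeta s - 2 ^ (-s) * riemannZeta s) := by
    have := eq_sub_of_add_eq' hsum
    exact this ▸ hos.hasSum
  have heven : (fun k : ℕ => LSeries.term (fun n => etaPhi n) s (2 * k)) =
      fun k => -(g (2 * k)) := by
    funext k
    rcases Nat.eq_zero_or_pos k with rfl | hk
    · simp [LSeries.term, hg, Complex.zero_cpow hs0]
    · rw [LSeries.term_of_ne_zero (by omega), etaPhi_even ⟨k, by ring⟩]
      simp [hg, neg_div]
  have hodd : (fun k : ℕ => LSeries.term (fun n => etaPhi n) s (2 * k + 1)) =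
      fun k => g (2 * k + 1) := by
    funext k
    rw [LSeries.term_of_ne_zero (by omega), etaPhi_odd (by simp [Nat.even_add_one, parity_simps])]
  have := HasSum.even_add_odd (f := fun n : ℕ => LSeries.term (fun n => etaPhi n) s n)
    (heven ▸ hge.neg) (hodd ▸ hgo)
  have h2 : (2 : ℂ) ^ (1 - s) = 2 * 2 ^ (-s) := by
    rw [sub_eq_add_neg, Complex.cpow_add _ _ two_ne_zero, Complex.cpow_one]
  have hval : (1 - 2 ^ (1 - s)) * riemannZeta s =
      -((2:ℂ) ^ (-s) * riemannZeta s) + (riemannZeta s - 2 ^ (-s) * riemannZeta s) := by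
    rw [h2]; ring
  rw [hval]; exact this

lemma etaLFunction_eq {s : ℂ} (hs : s ≠ 1) :
    ZMod.LFunction etaPhi s = (1 - 2 ^ (1 - s)) * riemannZeta s := by
  have hpc : IsPreconnected ({1}ᶜ : Set ℂ) :=
    (isConnected_compl_singleton_of_one_lt_rank
      (Complex.rank_real_complex ▸ Nat.one_lt_ofNat) _).isPreconnected
  have hne : (2 : ℂ) ∈ ({1}ᶜ : Set ℂ) := by norm_num
  refine AnalyticOnNhd.eqOn_of_preconnected_of_eventuallyEq (𝕜 := ℂ)
    (g := fun s => (1 - 2 ^ (1 - s)) * riemannZeta s) ?_ ?_ hpc hne ?_ hs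
  · exact (ZMod.differentiable_LFunction_of_sum_zero etaPhi_sum).differentiableOn.analyticOnNhd
      isOpen_compl_singleton
  · refine DifferentiableOn.analyticOnNhd (fun t ht => DifferentiableAt.differentiableWithinAt ?_)
      isOpen_compl_singleton
    refine DifferentiableAt.mul ?_ (differentiableAt_riemannZeta ht)
    exact ((differentiableAt_const _).sub
      (((differentiableAt_const _).sub differentiableAt_id).const_cpow (Or.inl two_ne_zero)))
  · have hmem : {z : ℂ | 1 < z.re} ∈ nhds (2 : ℂ) :=
      (isOpen_lt continuous_const Complex.continuous_re).mem_nhds (by norm_num)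
    filter_upwards [hmem] with z hz
    rw [ZMod.LFunction_eq_LSeries etaPhi hz, LSeries]
    exact (etaSeries hz).tsum_eq

lemma etaPhi_norm (j : ZMod 2) : ‖etaPhi j‖ = 1 := by
  rw [etaPhi]; split_ifs <;> simp

noncomputable def etaF : ℝ → ℂ := fun t => 1 / (Real.exp t + 1)

lemma etaF_hasSum {t : ℝ} (ht : 0 < t) :
    HasSum (fun n : ℕ => (if n = 0 then 0 else etaPhi (n : ZMod 2)) *
      (Real.exp (-(n : ℝ) * t) : ℝ)) (etaF t) := by
  set r : ℝ := Real.exp (-t) with hrdef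
  have hr0 : 0 < r := Real.exp_pos _
  have hr1 : r < 1 := Real.exp_lt_one_iff.mpr (by linarith)
  have hnorm : ‖-(r : ℂ)‖ < 1 := by
    rw [norm_neg, Complex.norm_real, Real.norm_eq_abs, abs_of_pos hr0]; exact hr1
  have hgeo := (hasSum_geometric_of_norm_lt_one hnorm).neg
  have hupd := hgeo.update 0 0
  have hfun : Function.update (fun n : ℕ => -(-(r : ℂ)) ^ n) 0 0 =
      fun n : ℕ => (if n = 0 then 0 else etaPhi (n : ZMod 2)) *
        (Real.exp (-(n : ℝ) * t) : ℝ) := by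
    funext n
    match n with
    | 0 => simp
    | (n + 1) =>
      rw [Function.update_of_ne (Nat.succ_ne_zero n)]
      have hexp : Real.exp (-((n + 1 : ℕ) : ℝ) * t) = r ^ (n + 1) := by
        rw [hrdef, ← Real.exp_nat_mul]; ring_nf
      rw [if_neg (Nat.succ_ne_zero n), hexp]
      rcases Nat.even_or_odd n with h | h
      · rw [etaPhi_odd (n := n + 1) (by simp [Nat.even_add_one, h])]
        push_cast
        simp only [Nat.succ_eq_add_one]
        rw [neg_pow, Odd.neg_one_pow h.add_one]
        ring
      · rw [etaPhi_even (n := n + 1) h.add_one]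
        push_cast
        simp only [Nat.succ_eq_add_one]
        rw [neg_pow, Even.neg_one_pow h.add_one]
        ring
  have hval : (0 : ℂ) - (-(-(r : ℂ)) ^ 0) + -(1 - -(r : ℂ))⁻¹ = etaF t := by
    have hEpos : 0 < Real.exp t + 1 := by positivity
    have hrpos : 0 < 1 + r := by positivity
    have hre : (1 : ℝ) - (1 + r)⁻¹ = 1 / (Real.exp t + 1) := by
      rw [hrdef, Real.exp_neg]
      have hE : Real.exp t ≠ 0 := (Real.exp_pos t).ne'
      field_simp
      ring
    have hc := congrArg (fun y : ℝ => (y : ℂ)) hre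
    push_cast at hc
    rw [etaF]
    push_cast
    rw [← hc]
    ring
  rw [← hfun] at *
  rw [← hval]
  exact hupd

lemma etaMellin_eq_of_one_lt {s : ℂ} (hs : 1 < s.re) :
    mellin etaF s = Complex.Gamma s * ((1 - 2 ^ (1 - s)) * riemannZeta s) := by
  have h0 : 0 < s.re := lt_trans one_pos hs
  have key := hasSum_mellin (F := etaF) (s := s)
    (a := fun n : ℕ => if n = 0 then 0 else etaPhi (n : ZMod 2))
    (p := fun n : ℕ => (n : ℝ))
    (fun n => by
      rcases Nat.eq_zero_or_pos n with rfl | hn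
      · exact Or.inl (if_pos rfl)
      · exact Or.inr (by simpa using hn))
    h0 (fun t ht => etaF_hasSum ht)
    (by
      apply Summable.of_nonneg_of_le (fun n => by positivity)
        (fun n => ?_) (Real.summable_one_div_nat_rpow.mpr hs)
      rcases Nat.eq_zero_or_pos n with rfl | hn
      · simp [Real.zero_rpow h0.ne']
      · rw [if_neg hn.ne', etaPhi_norm]
      )
  have hterm : (fun n : ℕ => Complex.Gamma s * (if n = 0 then 0 else etaPhi (n : ZMod 2)) /
      ((n : ℝ) : ℂ) ^ s) = fun n : ℕ => Complex.Gamma s * LSeries.term (fun n => etaPhi n) s n := by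
    funext n
    rcases Nat.eq_zero_or_pos n with rfl | hn
    · simp
    · rw [if_neg hn.ne', LSeries.term_of_ne_zero hn.ne', mul_div_assoc]
      norm_num
  rw [hterm] at key
  exact key.unique ((etaSeries hs).mul_left _)

lemma etaF_cont : Continuous etaF := by
  apply Continuous.div continuous_const
  · exact (Complex.continuous_ofReal.comp Real.continuous_exp).add continuous_const
  · intro t
    have : (Real.exp t : ℂ) + 1 = ((Real.exp t + 1 : ℝ) : ℂ) := by push_cast; ring
    rw [this]
    exact_mod_cast (by positivity : Real.exp t + 1 ≠ 0)

lemma etaF_norm (t : ℝ) : ‖etaF t‖ = (Real.exp t + 1)⁻¹ := by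
  have : etaF t = ((1 / (Real.exp t + 1) : ℝ) : ℂ) := by rw [etaF]; push_cast; ring
  rw [this, Complex.norm_real, Real.norm_eq_abs, abs_of_pos (by positivity)]
  rw [one_div]

lemma etaMellin_diff {s : ℂ} (hs : 0 < s.re) : DifferentiableAt ℂ (mellin etaF) s := by
  refine mellin_differentiableAt_of_isBigO_rpow_exp one_pos
    (etaF_cont.continuousOn.locallyIntegrableOn measurableSet_Ioi) ?_ ?_ hs
  · refine Asymptotics.IsBigO.of_bound 1 ?_
    filter_upwards [Filter.eventually_ge_atTop (0 : ℝ)] with t _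
    rw [etaF_norm, one_mul, Real.norm_eq_abs, abs_of_pos (Real.exp_pos _), neg_one_mul,
      Real.exp_neg]
    rw [inv_le_inv₀ (by positivity) (Real.exp_pos _)]
    linarith
  · refine Asymptotics.IsBigO.of_bound 1 ?_
    filter_upwards [self_mem_nhdsWithin] with t (ht : 0 < t)
    rw [etaF_norm, one_mul, Real.norm_eq_abs, neg_zero, Real.rpow_zero, abs_one]
    rw [inv_le_one_iff₀]
    right
    linarith [Real.exp_pos t]

lemma etaMellin_eq {s : ℂ} (hs : 0 < s.re) :
    mellin etaF s = Complex.Gamma s * ZMod.LFunction etaPhi s := by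
  have hUo : IsOpen {z : ℂ | 0 < z.re} := isOpen_lt continuous_const Complex.continuous_re
  have hUp : IsPreconnected {z : ℂ | 0 < z.re} := (convex_halfSpace_re_gt 0).isPreconnected
  have h2 : (2 : ℂ) ∈ {z : ℂ | 0 < z.re} := by norm_num
  refine AnalyticOnNhd.eqOn_of_preconnected_of_eventuallyEq (𝕜 := ℂ)
    (f := mellin etaF) (g := fun z => Complex.Gamma z * ZMod.LFunction etaPhi z)
    ?_ ?_ hUp h2 ?_ hs
  · exact DifferentiableOn.analyticOnNhd
      (fun z hz => (etaMellin_diff hz).differentiableWithinAt) hUo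
  · refine DifferentiableOn.analyticOnNhd
      (fun z hz => DifferentiableAt.differentiableWithinAt ?_) hUo
    refine DifferentiableAt.mul (Complex.differentiableAt_Gamma z (fun m => ?_))
      (ZMod.differentiable_LFunction_of_sum_zero etaPhi_sum z)
    intro h
    rw [h] at hz
    simp only [Set.mem_setOf_eq, Complex.neg_re, Complex.natCast_re] at hz
    have := Nat.cast_nonneg (α := ℝ) m
    linarith
  · have hmem : {z : ℂ | 1 < z.re} ∈ nhds (2 : ℂ) :=
      (isOpen_lt continuous_const Complex.continuous_re).mem_nhds (by norm_num)
    filter_upwards [hmem] with z hz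
    have hz1 : z ≠ 1 := fun h => by rw [h] at hz; simp at hz
    rw [etaMellin_eq_of_one_lt hz, etaLFunction_eq hz1]

/-- For real `x > 0`, `x ≠ 1`: `∫₀^∞ x·t^{x-1}/(eᵗ+1) dt = (1 - 2^{1-x})·ζ(x)·Γ(x+1)`,
where `ζ(x)` is the analytic continuation of the Riemann zeta function (real-valued at
real arguments). -/
theorem integral_eq_eta_zeta (x : ℝ) (hx : 0 < x) (hx1 : x ≠ 1) :
    ∫ t in Set.Ioi (0 : ℝ), x * t ^ (x - 1) / (Real.exp t + 1) =
      (1 - (2 : ℝ) ^ (1 - x)) * (riemannZeta (x : ℂ)).re * Real.Gamma (x + 1) := by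
  have hre : 0 < ((x : ℂ)).re := by rwa [Complex.ofReal_re]
  have hx1' : (x : ℂ) ≠ 1 := by exact_mod_cast hx1
  have hmel : mellin etaF (x : ℂ) =
      Complex.Gamma x * ((1 - 2 ^ (1 - (x : ℂ))) * riemannZeta x) := by
    rw [etaMellin_eq hre, etaLFunction_eq hx1']
  have hint : mellin etaF (x : ℂ) =
      ((∫ t in Set.Ioi (0 : ℝ), t ^ (x - 1) / (Real.exp t + 1) : ℝ) : ℂ) := by
    rw [mellin]
    have hco : ∀ t ∈ Set.Ioi (0 : ℝ), (t : ℂ) ^ ((x : ℂ) - 1) • etaF t =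
        ((t ^ (x - 1) / (Real.exp t + 1) : ℝ) : ℂ) := by
      intro t ht
      simp only [smul_eq_mul]
      rw [etaF]
      have h1 : ((t : ℂ)) ^ ((x : ℂ) - 1) = ((t ^ (x - 1) : ℝ) : ℂ) := by
        rw [Complex.ofReal_cpow (le_of_lt ht)]
        push_cast
        ring_nf
      rw [h1]
      push_cast
      ring
    rw [setIntegral_congr_fun measurableSet_Ioi hco]
    exact integral_ofReal
  have h2 : (2 : ℂ) ^ (1 - (x : ℂ)) = (((2 : ℝ) ^ (1 - x) : ℝ) : ℂ) := by
    rw [Complex.ofReal_cpow (by norm_num)]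
    push_cast
    ring_nf
  have hkey : ((∫ t in Set.Ioi (0 : ℝ), t ^ (x - 1) / (Real.exp t + 1) : ℝ) : ℂ) =
      ((Real.Gamma x * (1 - (2 : ℝ) ^ (1 - x)) : ℝ) : ℂ) * riemannZeta x := by
    rw [← hint, hmel, Complex.Gamma_ofReal, h2]
    push_cast
    ring
  have hI : (∫ t in Set.Ioi (0 : ℝ), t ^ (x - 1) / (Real.exp t + 1)) =
      Real.Gamma x * (1 - (2 : ℝ) ^ (1 - x)) * (riemannZeta (x : ℂ)).re := by
    have := congrArg Complex.re hkey
    rwa [Complex.ofReal_re, Complex.re_ofReal_mul] at this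
  have hsplit : ∀ t : ℝ, x * t ^ (x - 1) / (Real.exp t + 1) =
      x * (t ^ (x - 1) / (Real.exp t + 1)) := fun t => by ring
  simp_rw [hsplit]
  rw [MeasureTheory.integral_const_mul, hI, Real.Gamma_add_one hx.ne']
  ring
end

section
/- For every real x > 0, integration by parts gives ∫₀^∞ x·t^{x-1}/(e^t + 1) dt = ∫₀^∞ t^x·e^t/(e^t + 1)² dt. -/
open Real MeasureTheory

lemma exp_add_one_pos (t : ℝ) : (0:ℝ) < Real.exp t + 1 := by positivity

lemma exp_neg_mul_exp_add_one (t : ℝ) :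
    Real.exp (-t) * (Real.exp t + 1) = 1 + Real.exp (-t) := by
  rw [mul_add, ← Real.exp_add, mul_one]; simp

lemma eta_int1 (x : ℝ) (hx : 0 < x) :
    IntegrableOn (fun t : ℝ => x * t ^ (x - 1) / (Real.exp t + 1)) (Set.Ioi 0) := by
  have hg : IntegrableOn (fun t : ℝ => x * (Real.exp (-t) * t ^ (x - 1))) (Set.Ioi 0) :=
    (Real.GammaIntegral_convergent hx).const_mul x
  refine hg.mono' ?_ ?_
  · apply ContinuousOn.aestronglyMeasurable ?_ measurableSet_Ioi
    intro t ht
    exact ((continuousAt_const.mul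
      (Real.continuousAt_rpow_const t (x - 1) (Or.inl (ne_of_gt ht)))).div
      ((Real.continuous_exp.continuousAt).add continuousAt_const)
      (ne_of_gt (exp_add_one_pos t))).continuousWithinAt
  · filter_upwards [ae_restrict_mem measurableSet_Ioi] with t ht
    have h1 : (0:ℝ) ≤ t ^ (x - 1) := Real.rpow_nonneg (le_of_lt ht) _
    rw [Real.norm_eq_abs, abs_of_nonneg (by positivity), div_le_iff₀ (exp_add_one_pos t)]
    nlinarith [exp_neg_mul_exp_add_one t, Real.exp_pos (-t),
      mul_nonneg (mul_nonneg hx.le h1) (Real.exp_pos (-t)).le]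

lemma eta_int2 (x : ℝ) (hx : 0 < x) :
    IntegrableOn (fun t : ℝ => t ^ x * Real.exp t / (Real.exp t + 1) ^ 2) (Set.Ioi 0) := by
  have hg : IntegrableOn (fun t : ℝ => Real.exp (-t) * t ^ ((x + 1) - 1)) (Set.Ioi 0) :=
    Real.GammaIntegral_convergent (by linarith)
  refine hg.mono' ?_ ?_
  · apply ContinuousOn.aestronglyMeasurable ?_ measurableSet_Ioi
    intro t ht
    exact (((Real.continuousAt_rpow_const t x (Or.inl (ne_of_gt ht))).mul
      Real.continuous_exp.continuousAt).div
      (((Real.continuous_exp.continuousAt).add continuousAt_const).pow 2)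
      (pow_ne_zero 2 (ne_of_gt (exp_add_one_pos t)))).continuousWithinAt
  · filter_upwards [ae_restrict_mem measurableSet_Ioi] with t ht
    have h1 : (0:ℝ) ≤ t ^ x := Real.rpow_nonneg (le_of_lt ht) _
    have hsq : (0:ℝ) < (Real.exp t + 1) ^ 2 := by positivity
    rw [Real.norm_eq_abs, abs_of_nonneg (by positivity), div_le_iff₀ hsq]
    have h2 : t ^ ((x + 1) - 1) = t ^ x := by ring_nf
    rw [h2]
    calc t ^ x * Real.exp t ≤ t ^ x * (Real.exp t + 2 + Real.exp (-t)) := by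
          nlinarith [Real.exp_pos (-t)]
      _ = Real.exp (-t) * t ^ x * (Real.exp t + 1) ^ 2 := by
          have h3 : Real.exp (-t) * Real.exp t = 1 := by rw [← Real.exp_add]; simp
          linear_combination (-(t ^ x) * (Real.exp t + 2)) * h3

/-- Integration by parts: for `x > 0`,
`∫₀^∞ x·t^{x-1}/(eᵗ+1) dt = ∫₀^∞ t^x·eᵗ/(eᵗ+1)² dt`. -/
theorem integral_by_parts_eta (x : ℝ) (hx : 0 < x) :
    ∫ t in Set.Ioi (0 : ℝ), x * t ^ (x - 1) / (Real.exp t + 1) =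
      ∫ t in Set.Ioi (0 : ℝ), t ^ x * Real.exp t / (Real.exp t + 1) ^ 2 := by
  set f : ℝ → ℝ := fun t => t ^ x / (Real.exp t + 1) with hf
  set f' : ℝ → ℝ := fun t =>
    x * t ^ (x - 1) / (Real.exp t + 1) - t ^ x * Real.exp t / (Real.exp t + 1) ^ 2 with hf'
  have hcont : ContinuousWithinAt f (Set.Ici 0) 0 := by
    apply ContinuousAt.continuousWithinAt
    exact (Real.continuousAt_rpow_const 0 x (Or.inr hx.le)).div
      ((Real.continuous_exp.continuousAt).add continuousAt_const)
      (ne_of_gt (exp_add_one_pos 0))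
  have hderiv : ∀ t ∈ Set.Ioi (0:ℝ), HasDerivAt f (f' t) t := by
    intro t ht
    have h1 : HasDerivAt (fun t : ℝ => t ^ x) (x * t ^ (x - 1)) t :=
      Real.hasDerivAt_rpow_const (Or.inl (ne_of_gt ht))
    have h2 : HasDerivAt (fun t : ℝ => Real.exp t + 1) (Real.exp t) t :=
      (Real.hasDerivAt_exp t).add_const 1
    have := h1.div h2 (ne_of_gt (exp_add_one_pos t))
    convert this using 1
    show x * t ^ (x - 1) / (Real.exp t + 1) - t ^ x * Real.exp t / (Real.exp t + 1) ^ 2 = _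
    field_simp
    all_goals rfl
  have hint : IntegrableOn f' (Set.Ioi 0) := (eta_int1 x hx).sub (eta_int2 x hx)
  have htend : Filter.Tendsto f Filter.atTop (nhds 0) := by
    have hb : Filter.Tendsto (fun t : ℝ => t ^ x * Real.exp (-(1:ℝ) * t)) Filter.atTop (nhds 0) :=
      tendsto_rpow_mul_exp_neg_mul_atTop_nhds_zero x 1 one_pos
    apply squeeze_zero' (g := fun t : ℝ => t ^ x * Real.exp (-(1:ℝ) * t))
    · filter_upwards [Filter.eventually_gt_atTop (0:ℝ)] with t ht
      positivity
    · filter_upwards [Filter.eventually_gt_atTop (0:ℝ)] with t ht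
      have h1 : (0:ℝ) ≤ t ^ x := Real.rpow_nonneg ht.le _
      rw [hf]
      simp only [neg_one_mul, Real.exp_neg]
      rw [div_le_iff₀ (exp_add_one_pos t)]
      have h3 : (Real.exp t)⁻¹ * (Real.exp t + 1) = 1 + (Real.exp t)⁻¹ := by
        field_simp
      nlinarith [Real.exp_pos t, inv_pos.mpr (Real.exp_pos t),
        mul_nonneg h1 (inv_pos.mpr (Real.exp_pos t)).le]
    · exact hb
  have key := integral_Ioi_of_hasDerivAt_of_tendsto hcont hderiv hint htend
  have hf0 : f 0 = 0 := by
    simp [hf, Real.rpow_eq_zero_iff_of_nonneg le_rfl, ne_of_gt hx]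
  rw [hf0, sub_zero] at key
  have := integral_sub (eta_int1 x hx) (eta_int2 x hx)
  rw [← this] at *
  have : ∫ t in Set.Ioi (0:ℝ), (x * t ^ (x - 1) / (Real.exp t + 1) - t ^ x * Real.exp t / (Real.exp t + 1) ^ 2) = 0 := key
  have hs := integral_sub (eta_int1 x hx) (eta_int2 x hx)
  rw [hs] at this
  linarith
end

section
/- The limit as x → 0⁺ of ∫₀^∞ x·t^{x-1}/(e^t + 1) dt equals 1/2; equivalently, lim_{x→0⁺} ∫₀^∞ t^x·e^t/(e^t + 1)² dt = ∫₀^∞ e^t/(e^t + 1)² dt = 1/2. -/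
namespace Helpers

open Real MeasureTheory Filter Set

lemma exp_pos_add (t : ℝ) : (0:ℝ) < Real.exp t + 1 := by positivity

lemma inv_le_exp_neg (t : ℝ) : (Real.exp t + 1)⁻¹ ≤ Real.exp (-t) := by
  rw [Real.exp_neg]
  exact inv_anti₀ (Real.exp_pos t) (by linarith)

lemma g_le (t : ℝ) : Real.exp t / (Real.exp t + 1) ^ 2 ≤ Real.exp (-t) := by
  have h2 : Real.exp (-t) * (Real.exp t + 1) ^ 2 = (Real.exp t + 1) ^ 2 / Real.exp t := by
    rw [Real.exp_neg]; ring
  rw [div_le_iff₀ (by positivity), h2, le_div_iff₀ (Real.exp_pos t)]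
  nlinarith [Real.exp_pos t]

lemma integrable_g : IntegrableOn (fun t : ℝ => Real.exp t / (Real.exp t + 1) ^ 2) (Ioi 0) := by
  have h := exp_neg_integrableOn_Ioi (0:ℝ) one_pos
  apply h.mono' ?_ ?_
  · exact ((Real.continuous_exp.continuousOn.div
      (by fun_prop) (fun t _ => by positivity))).aestronglyMeasurable measurableSet_Ioi
  · filter_upwards with t
    rw [Real.norm_of_nonneg (by positivity)]
    simpa using g_le t

lemma int3 : (∫ t in Ioi (0:ℝ), Real.exp t / (Real.exp t + 1) ^ 2) = 1 / 2 := by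
  have key : (∫ t in Ioi (0:ℝ), Real.exp t / (Real.exp t + 1) ^ 2)
      = 0 - (-(Real.exp 0 + 1)⁻¹) := by
    apply integral_Ioi_of_hasDerivAt_of_tendsto
      (f := fun t => -(Real.exp t + 1)⁻¹)
    · exact ((Real.continuous_exp.add continuous_const).inv₀ (fun t => (exp_pos_add t).ne')).neg.continuousWithinAt
    · intro t _
      have h := (((Real.hasDerivAt_exp t).add_const 1).inv (by positivity)).neg
      convert h using 1
      · rfl
      · ring
    · exact integrable_g
    · have h1 : Tendsto (fun t : ℝ => Real.exp t + 1) atTop atTop :=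
        Real.tendsto_exp_atTop.atTop_add tendsto_const_nhds
      simpa using (h1.inv_tendsto_atTop).neg
  rw [key]
  norm_num [Real.exp_zero]

lemma integrable_A {x : ℝ} (hx : 0 < x) :
    IntegrableOn (fun t : ℝ => x * t ^ (x - 1) / (Real.exp t + 1)) (Ioi 0) := by
  have hg := (Real.GammaIntegral_convergent hx).const_mul x
  apply hg.mono' ?_ ?_
  · apply ContinuousOn.aestronglyMeasurable ?_ measurableSet_Ioi
    apply ContinuousOn.div
    · exact continuousOn_const.mul (continuousOn_id.rpow_const fun t ht => Or.inl (ne_of_gt ht))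
    · fun_prop
    · intro t _; positivity
  · rw [ae_restrict_iff' measurableSet_Ioi]
    filter_upwards with t ht
    have ht0 : (0:ℝ) < t := ht
    have h1 : (0:ℝ) ≤ t ^ (x - 1) := (Real.rpow_pos_of_pos ht0 _).le
    rw [Real.norm_of_nonneg (by positivity)]
    rw [div_eq_mul_inv, mul_assoc]
    apply mul_le_mul_of_nonneg_left _ hx.le
    rw [mul_comm (Real.exp (-t))]
    exact mul_le_mul_of_nonneg_left (by simpa [Real.exp_neg] using inv_le_exp_neg t) h1

lemma integrable_B {x : ℝ} (hx : 0 ≤ x) :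
    IntegrableOn (fun t : ℝ => t ^ x * Real.exp t / (Real.exp t + 1) ^ 2) (Ioi 0) := by
  have hg := Real.GammaIntegral_convergent (by linarith : (0:ℝ) < x + 1)
  simp only [add_sub_cancel_right] at hg
  apply hg.mono' ?_ ?_
  · apply ContinuousOn.aestronglyMeasurable ?_ measurableSet_Ioi
    apply ContinuousOn.div
    · exact (continuousOn_id.rpow_const fun t ht => Or.inl (ne_of_gt ht)).mul
        Real.continuous_exp.continuousOn
    · fun_prop
    · intro t _; positivity
  · rw [ae_restrict_iff' measurableSet_Ioi]
    filter_upwards with t ht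
    have ht0 : (0:ℝ) < t := ht
    rw [Real.norm_of_nonneg (by positivity), mul_comm (Real.exp (-t)), mul_div_assoc]
    exact mul_le_mul_of_nonneg_left (g_le t) (Real.rpow_pos_of_pos ht0 _).le

lemma rpow_le_one_add {x t : ℝ} (hx : 0 < x) (hx1 : x ≤ 1) (ht : 0 < t) :
    t ^ x ≤ 1 + t := by
  rcases le_or_gt t 1 with h | h
  · have := Real.rpow_le_one ht.le h hx.le
    linarith
  · have := Real.rpow_le_rpow_of_exponent_le h.le hx1
    rw [Real.rpow_one] at this
    linarith

lemma eq_int {x : ℝ} (hx : 0 < x) :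
    (∫ t in Ioi (0:ℝ), x * t ^ (x - 1) / (Real.exp t + 1))
      = ∫ t in Ioi (0:ℝ), t ^ x * Real.exp t / (Real.exp t + 1) ^ 2 := by
  set f : ℝ → ℝ := fun t => t ^ x * (Real.exp t + 1)⁻¹ with hf
  have key : (∫ t in Ioi (0:ℝ), (x * t ^ (x - 1) / (Real.exp t + 1)
      - t ^ x * Real.exp t / (Real.exp t + 1) ^ 2)) = 0 - f 0 := by
    apply integral_Ioi_of_hasDerivAt_of_tendsto
    · exact ((Real.continuousAt_rpow_const 0 x (Or.inr hx.le)).continuousWithinAt.mul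
        ((Real.continuous_exp.add continuous_const).inv₀
          (fun t => (exp_pos_add t).ne')).continuousWithinAt)
    · intro t ht
      have ht0 : (0:ℝ) < t := ht
      have h1 : HasDerivAt (fun t : ℝ => t ^ x) (x * t ^ (x - 1)) t :=
        Real.hasDerivAt_rpow_const (Or.inl ht0.ne')
      have h2 : HasDerivAt (fun t : ℝ => (Real.exp t + 1)⁻¹)
          (-Real.exp t / (Real.exp t + 1) ^ 2) t :=
        ((Real.hasDerivAt_exp t).add_const 1).inv (by positivity)
      have h := h1.mul h2
      convert h using 1
      have hne : Real.exp t + 1 ≠ 0 := by positivity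
      · rfl
      · rfl
      · ring
    · apply Integrable.sub (integrable_A hx) (integrable_B hx.le)
    · apply squeeze_zero' (g := fun t : ℝ => t ^ x * Real.exp (-(1:ℝ) * t))
      · filter_upwards [eventually_gt_atTop 0] with t ht
        positivity
      · filter_upwards [eventually_gt_atTop 0] with t ht
        exact mul_le_mul_of_nonneg_left (by simpa using inv_le_exp_neg t)
          (Real.rpow_pos_of_pos ht _).le
      · exact tendsto_rpow_mul_exp_neg_mul_atTop_nhds_zero x 1 one_pos
  rw [integral_sub (integrable_A hx) (integrable_B hx.le)] at key
  have hf0 : f 0 = 0 := by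
    simp [hf, Real.zero_rpow hx.ne']
  rw [hf0] at key
  linarith

lemma bound_integrable :
    IntegrableOn (fun t : ℝ => (1 + t) * Real.exp (-t)) (Ioi 0) := by
  have h1 := exp_neg_integrableOn_Ioi (0:ℝ) one_pos
  have h2 := Real.GammaIntegral_convergent (by norm_num : (0:ℝ) < 2)
  have h2' : IntegrableOn (fun t : ℝ => t * Real.exp (-t)) (Ioi 0) := by
    apply h2.congr_fun ?_ measurableSet_Ioi
    intro t ht
    have ht0 : (0:ℝ) < t := ht
    show Real.exp (-t) * t ^ ((2:ℝ) - 1) = t * Real.exp (-t)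
    norm_num [Real.rpow_one, mul_comm]
  have h3 : IntegrableOn (fun t : ℝ => Real.exp (-1 * t) + t * Real.exp (-t)) (Ioi 0) :=
    h1.add h2'
  apply h3.congr_fun ?_ measurableSet_Ioi
  intro t _
  simp only [neg_mul, one_mul]
  ring

lemma tendsto_B :
    Tendsto (fun x : ℝ => ∫ t in Ioi (0:ℝ), t ^ x * Real.exp t / (Real.exp t + 1) ^ 2)
      (nhdsWithin 0 (Ioi 0)) (nhds (∫ t in Ioi (0:ℝ), Real.exp t / (Real.exp t + 1) ^ 2)) := by
  apply tendsto_integral_filter_of_dominated_convergence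
    (fun t : ℝ => (1 + t) * Real.exp (-t))
  · filter_upwards with x
    apply ContinuousOn.aestronglyMeasurable ?_ measurableSet_Ioi
    apply ContinuousOn.div
    · exact (continuousOn_id.rpow_const fun t ht => Or.inl (ne_of_gt ht)).mul
        Real.continuous_exp.continuousOn
    · fun_prop
    · intro t _; positivity
  · filter_upwards [Ioo_mem_nhdsGT_of_mem (Set.mem_Ico.mpr ⟨le_refl 0, one_pos⟩)] with x hx
    rw [ae_restrict_iff' measurableSet_Ioi]
    filter_upwards with t ht
    have ht0 : (0:ℝ) < t := ht
    rw [Real.norm_of_nonneg (by positivity), mul_div_assoc]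
    exact mul_le_mul (rpow_le_one_add hx.1 hx.2.le ht0) (g_le t) (by positivity) (by positivity)
  · exact bound_integrable
  · rw [ae_restrict_iff' measurableSet_Ioi]
    filter_upwards with t ht
    have ht0 : (0:ℝ) < t := ht
    have hc : ContinuousAt (fun x : ℝ => t ^ x) 0 := by
      have : (fun x : ℝ => t ^ x) = fun x => Real.exp (Real.log t * x) := by
        funext x
        rw [Real.rpow_def_of_pos ht0]
      rw [this]
      fun_prop
    have h1 : Tendsto (fun x : ℝ => t ^ x) (nhdsWithin 0 (Ioi 0)) (nhds 1) := by
      have := hc.tendsto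
      rw [Real.rpow_zero] at this
      exact this.mono_left nhdsWithin_le_nhds
    have := (h1.mul_const (Real.exp t)).div_const ((Real.exp t + 1) ^ 2)
    simpa using this

end Helpers

open Real MeasureTheory Filter

/-- `lim_{x→0⁺} ∫₀^∞ x·t^{x-1}/(eᵗ+1) dt = 1/2`; equivalently,
`lim_{x→0⁺} ∫₀^∞ t^x·eᵗ/(eᵗ+1)² dt = ∫₀^∞ eᵗ/(eᵗ+1)² dt = 1/2`. -/
theorem tendsto_integral_one_half :
    Tendsto (fun x : ℝ => ∫ t in Set.Ioi (0 : ℝ), x * t ^ (x - 1) / (Real.exp t + 1))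
      (nhdsWithin 0 (Set.Ioi 0)) (nhds (1 / 2)) ∧
    Tendsto (fun x : ℝ => ∫ t in Set.Ioi (0 : ℝ), t ^ x * Real.exp t / (Real.exp t + 1) ^ 2)
      (nhdsWithin 0 (Set.Ioi 0)) (nhds (1 / 2)) ∧
    (∫ t in Set.Ioi (0 : ℝ), Real.exp t / (Real.exp t + 1) ^ 2) = 1 / 2 := by
  have hB : Tendsto (fun x : ℝ => ∫ t in Set.Ioi (0 : ℝ),
      t ^ x * Real.exp t / (Real.exp t + 1) ^ 2)
      (nhdsWithin 0 (Set.Ioi 0)) (nhds (1 / 2)) := by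
    have := Helpers.tendsto_B
    rwa [Helpers.int3] at this
  refine ⟨?_, hB, Helpers.int3⟩
  apply hB.congr'
  filter_upwards [self_mem_nhdsWithin] with x hx
  exact (Helpers.eq_int hx).symm
end
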